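/- arXiv:2111.10575 — 4 statements merged into one kernel-verified Lean document; each statement's English description precedes it below -/
import Mathlib

section
/- Let n ≥ 2 and let u be a convex C² function on B₁(0)∖{0} ⊂ ℝⁿ satisfying det D²u(x) = g(Du(x)) there, where g satisfies 0 < λ ≤ g ≤ Λ < ∞. Assume there are constants C₀, c₀ > 0 such that |x|·‖D²u(x)‖ ≤ C₀ and |x|·ξᵀ D²u(x) ξ ≥ c₀ for every x ∈ B₁(0)∖{0} and every unit vector ξ orthogonal to x. Let λ₁(x) ≥ λ₂(x) ≥ … ≥ λ_n(x) denote the eigenvalues of D²u(x). Then there exist constants c, C > 0 (depending only on n, λ, Λ, C₀, c₀) such that for all x ∈ B₁(0)∖{0}: c ≤ |x|·λ_i(x) ≤ C for every 1 ≤ i ≤ n−1, and c ≤ λ_n(x)/|x|^{n−1} ≤ C. -/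
open MeasureTheory
open scoped ENNReal

noncomputable section

/-- Euclidean n-space. -/
abbrev Eu (n : ℕ) := EuclideanSpace ℝ (Fin n)

/-- Partial derivative ∂ψ/∂xᵢ. -/
def pd {n : ℕ} (ψ : Eu n → ℝ) (i : Fin n) (x : Eu n) : ℝ :=
  fderiv ℝ ψ x (EuclideanSpace.single i 1)

/-- Second partial derivative ∂²ψ/∂xᵢ∂xⱼ. -/
def pd2 {n : ℕ} (ψ : Eu n → ℝ) (i j : Fin n) (x : Eu n) : ℝ :=
  pd (pd ψ j) i x

theorem aux_pd2_eq {n : ℕ} (u : Eu n → ℝ) (x : Eu n)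
    (h : ContDiffAt ℝ 2 u x) (i j : Fin n) :
    pd2 u i j x = fderiv ℝ (fderiv ℝ u) x (EuclideanSpace.single i 1) (EuclideanSpace.single j 1) := by
  have hd : DifferentiableAt ℝ (fderiv ℝ u) x := by
    have := h.fderiv_right (m := 1) (by norm_num)
    exact this.differentiableAt (by norm_num)
  have : pd u j = fun y => (ContinuousLinearMap.apply ℝ ℝ (EuclideanSpace.single j 1)) (fderiv ℝ u y) := rfl
  rw [pd2, pd, this, fderiv_comp' x (ContinuousLinearMap.differentiableAt _) hd]
  simp [ContinuousLinearMap.fderiv]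

theorem aux_sum_single {n : ℕ} (y : Eu n) : y = ∑ i, y i • EuclideanSpace.single i 1 := by
  have := (EuclideanSpace.basisFun (Fin n) ℝ).sum_repr y
  simpa [EuclideanSpace.basisFun_apply, EuclideanSpace.basisFun_repr] using this.symm

theorem aux_det_eq_prod {n : ℕ} (B : Eu n →L[ℝ] Eu n →L[ℝ] ℝ) (μ : Fin n → ℝ) (v : Fin n → Eu n)
    (hv : Orthonormal ℝ v)
    (hμ : ∀ i w, B (v i) w = μ i * (inner ℝ (v i) w : ℝ)) :
    (Matrix.of fun i j => B (EuclideanSpace.single i 1) (EuclideanSpace.single j 1)).det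
      = ∏ i, μ i := by
  classical
  set e : Fin n → Eu n := fun i => EuclideanSpace.single i 1 with he
  set M : Matrix (Fin n) (Fin n) ℝ := Matrix.of fun i j => B (e i) (e j) with hM
  set Q : Matrix (Fin n) (Fin n) ℝ := Matrix.of (fun k i => v k i) with hQ
  have hB : ∀ y z : Eu n, B y z = ∑ i, ∑ j, y i * z j * M i j := by
    intro y z
    conv_lhs => rw [aux_sum_single y, aux_sum_single z]
    simp only [map_sum, _root_.map_smul, ContinuousLinearMap.sum_apply,
      ContinuousLinearMap.smul_apply, smul_eq_mul, hM, Matrix.of_apply, Finset.mul_sum]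
    rw [Finset.sum_comm]
    exact Finset.sum_congr rfl fun i _ => Finset.sum_congr rfl fun j _ => by ring
  have hinner : ∀ y z : Eu n, (inner ℝ y z : ℝ) = ∑ i, y i * z i := by
    intro y z; simp [PiLp.inner_apply, RCLike.inner_apply, mul_comm]
  have hQM : Q * M * Q.transpose = Matrix.diagonal μ := by
    ext k l
    have h1 : (Q * M * Q.transpose) k l = ∑ j, (∑ i, Q k i * M i j) * Q l j := by
      simp [Matrix.mul_apply, Matrix.transpose_apply]
    have h2 : ∑ i, ∑ j, v k i * v l j * M i j = μ k * (if k = l then 1 else 0) := by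
      rw [← hB, hμ, orthonormal_iff_ite.mp hv]
    have h3 : (∑ j, (∑ i, Q k i * M i j) * Q l j) = ∑ i, ∑ j, v k i * v l j * M i j := by
      simp only [hQ, Matrix.of_apply, Finset.sum_mul]
      rw [Finset.sum_comm]
      exact Finset.sum_congr rfl fun i _ => Finset.sum_congr rfl fun j _ => by ring
    rw [h1, h3, h2, Matrix.diagonal_apply]
    by_cases hkl : k = l <;> simp [hkl]
  have hQQ : Q * Q.transpose = 1 := by
    ext k l
    have : (Q * Q.transpose) k l = ∑ i, v k i * v l i := by
      simp [Matrix.mul_apply, Matrix.transpose_apply, hQ]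
    rw [this, ← hinner, orthonormal_iff_ite.mp hv, Matrix.one_apply]
  have hdetQ : Q.det * Q.det = 1 := by
    have := congrArg Matrix.det hQQ
    rwa [Matrix.det_mul, Matrix.det_transpose, Matrix.det_one] at this
  have hdd := congrArg Matrix.det hQM
  rw [Matrix.det_mul, Matrix.det_mul, Matrix.det_transpose, Matrix.det_diagonal] at hdd
  calc M.det = Q.det * Q.det * M.det := by rw [hdetQ]; ring
    _ = Q.det * M.det * Q.det := by ring
    _ = ∏ i, μ i := hdd

theorem stmt5 (n : ℕ) (hn : 2 ≤ n) (ln : Fin n) (hln : (ln : ℕ) = n - 1)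
    (lam Lam : ℝ) (hlam : 0 < lam) (hLam : lam ≤ Lam)
    (C₀ c₀ : ℝ) (hC₀ : 0 < C₀) (hc₀ : 0 < c₀) :
    ∃ c C : ℝ, 0 < c ∧ 0 < C ∧
      ∀ (u g : Eu n → ℝ),
        -- u is a convex C² function on B₁ ∖ {0}
        ConvexOn ℝ (Metric.ball (0 : Eu n) 1) u →
        ContDiffOn ℝ 2 u (Metric.ball (0 : Eu n) 1 \ {0}) →
        -- det D²u = g(Du), with λ ≤ g ≤ Λ
        (∀ p, lam ≤ g p ∧ g p ≤ Lam) →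
        (∀ x ∈ Metric.ball (0 : Eu n) 1 \ {0},
          (Matrix.of fun i j => pd2 u i j x).det = g (gradient u x)) →
        -- |x|·‖D²u(x)‖ ≤ C₀
        (∀ x ∈ Metric.ball (0 : Eu n) 1 \ {0},
          ‖x‖ * ‖fderiv ℝ (fderiv ℝ u) x‖ ≤ C₀) →
        -- |x|·ξᵀD²u(x)ξ ≥ c₀ for unit ξ ⟂ x
        (∀ x ∈ Metric.ball (0 : Eu n) 1 \ {0}, ∀ ξ : Eu n, ‖ξ‖ = 1 →
          (inner ℝ ξ x : ℝ) = 0 → c₀ ≤ ‖x‖ * fderiv ℝ (fderiv ℝ u) x ξ ξ) →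
        -- eigenvalue bounds: for any decreasing enumeration μ of the eigenvalues of
        -- D²u(x) (with orthonormal eigenbasis v) …
        ∀ x ∈ Metric.ball (0 : Eu n) 1 \ {0},
        ∀ (μ : Fin n → ℝ) (v : Fin n → Eu n),
          Orthonormal ℝ v →
          (∀ i : Fin n, ∀ w : Eu n,
            fderiv ℝ (fderiv ℝ u) x (v i) w = μ i * (inner ℝ (v i) w : ℝ)) →
          (∀ i j : Fin n, i ≤ j → μ j ≤ μ i) →
          -- … c ≤ |x|·λᵢ ≤ C for i = 1,…,n-1 and c ≤ λₙ/|x|^{n-1} ≤ C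
          (∀ i : Fin n, i ≠ ln → c ≤ ‖x‖ * μ i ∧ ‖x‖ * μ i ≤ C) ∧
          c ≤ μ ln / ‖x‖ ^ (n - 1) ∧ μ ln / ‖x‖ ^ (n - 1) ≤ C := by
  classical
  have hCpow : (0:ℝ) < C₀ ^ (n-1) := pow_pos hC₀ _
  have hcpow : (0:ℝ) < c₀ ^ (n-1) := pow_pos hc₀ _
  refine ⟨min c₀ (lam / C₀ ^ (n-1)), max C₀ (Lam / c₀ ^ (n-1)),
    lt_min hc₀ (div_pos hlam hCpow), lt_of_lt_of_le hC₀ (le_max_left _ _), ?_⟩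
  intro u g hconv hu hg hdet hC0all hc0all x hx μ v hv hμ hmono
  set B := fderiv ℝ (fderiv ℝ u) x with hBdef
  have hx0 : x ≠ 0 := by simpa using hx.2
  have hxn : 0 < ‖x‖ := norm_pos_iff.mpr hx0
  have hopen : IsOpen (Metric.ball (0 : Eu n) 1 \ {0}) :=
    Metric.isOpen_ball.sdiff isClosed_singleton
  have hat : ContDiffAt ℝ 2 u x := (hu x hx).contDiffAt (hopen.mem_nhds hx)
  -- matrix identity and determinant
  have hMeq : (Matrix.of fun i j => pd2 u i j x)
      = Matrix.of fun i j => B (EuclideanSpace.single i 1) (EuclideanSpace.single j 1) := by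
    ext i j; exact aux_pd2_eq u x hat i j
  have hprod : ∏ i, μ i = g (gradient u x) := by
    rw [← aux_det_eq_prod B μ v hv hμ, ← hMeq, hdet x hx]
  -- orthonormality facts
  have hvnorm : ∀ i, ‖v i‖ = 1 := hv.1
  have hvv := orthonormal_iff_ite.mp hv
  -- upper bound for each eigenvalue
  have hupper : ∀ i, ‖x‖ * μ i ≤ C₀ := by
    intro i
    have hμi : μ i = B (v i) (v i) := by
      rw [hμ i (v i), real_inner_self_eq_norm_sq, hvnorm i]; ring
    have h1 : |B (v i) (v i)| ≤ ‖B (v i)‖ * ‖v i‖ := (B (v i)).le_opNorm (v i)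
    have h2 : ‖B (v i)‖ ≤ ‖B‖ * ‖v i‖ := B.le_opNorm (v i)
    have h3 : μ i ≤ ‖B‖ := by
      rw [hμi]
      calc B (v i) (v i) ≤ |B (v i) (v i)| := le_abs_self _
        _ ≤ ‖B (v i)‖ * ‖v i‖ := h1
        _ = ‖B (v i)‖ := by rw [hvnorm i, mul_one]
        _ ≤ ‖B‖ * ‖v i‖ := h2
        _ = ‖B‖ := by rw [hvnorm i, mul_one]
    calc ‖x‖ * μ i ≤ ‖x‖ * ‖B‖ := by
          exact mul_le_mul_of_nonneg_left h3 (norm_nonneg x)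
      _ ≤ C₀ := hC0all x hx
  -- lower bound c₀ ≤ ‖x‖ * μ a, a = n-2
  set a : Fin n := ⟨n-2, by omega⟩ with ha
  have haln : a ≠ ln := by
    intro h
    have := congrArg Fin.val h
    rw [hln] at this
    simp only [ha] at this
    omega
  have hab : a ≠ ln := haln
  have hlowa : c₀ ≤ ‖x‖ * μ a := by
    set b := ln with hb
    set α : ℝ := inner ℝ (v a) x with hα
    set β : ℝ := inner ℝ (v b) x with hβ
    by_cases hα0 : α = 0
    · have hkey := hc0all x hx (v a) (hvnorm a) hα0
      have : B (v a) (v a) = μ a := by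
        rw [hμ a (v a), real_inner_self_eq_norm_sq, hvnorm a]; ring
      rw [this] at hkey
      exact hkey
    · set w : Eu n := β • v a - α • v b with hw
      have hvaa : (inner ℝ (v a) (v a) : ℝ) = 1 := by simpa using hvv a a
      have hvbb : (inner ℝ (v b) (v b) : ℝ) = 1 := by simpa using hvv b b
      have hvab : (inner ℝ (v a) (v b) : ℝ) = 0 := by simpa [hab] using hvv a b
      have hvba : (inner ℝ (v b) (v a) : ℝ) = 0 := by
        rw [real_inner_comm]; exact hvab
      have hiaw : (inner ℝ (v a) w : ℝ) = β := by
        rw [hw, inner_sub_right, real_inner_smul_right, real_inner_smul_right, hvaa, hvab]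
        ring
      have hibw : (inner ℝ (v b) w : ℝ) = -α := by
        rw [hw, inner_sub_right, real_inner_smul_right, real_inner_smul_right, hvbb, hvba]
        ring
      have hwx : (inner ℝ w x : ℝ) = 0 := by
        rw [hw, inner_sub_left, real_inner_smul_left, real_inner_smul_left, ← hα, ← hβ]
        ring
      set s : ℝ := α^2 + β^2 with hs
      have hspos : 0 < s := by positivity
      have hww : (inner ℝ w w : ℝ) = s := by
        rw [hw]
        simp only [inner_sub_left, inner_sub_right, real_inner_smul_left,
          real_inner_smul_right, hvaa, hvbb, hvab, hvba]
        rw [hs]; ring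
      have hwnorm : ‖w‖ * ‖w‖ = s := by
        rw [← real_inner_self_eq_norm_mul_norm, hww]
      have hw0 : w ≠ 0 := by
        intro h
        rw [h, norm_zero, mul_zero] at hwnorm
        exact hspos.ne hwnorm
      set ξ : Eu n := ‖w‖⁻¹ • w with hξ
      have hξn : ‖ξ‖ = 1 := norm_smul_inv_norm hw0
      have hξx : (inner ℝ ξ x : ℝ) = 0 := by
        rw [hξ, real_inner_smul_left, hwx, mul_zero]
      have hBw : B w = β • B (v a) - α • B (v b) := by
        rw [hw]; simp only [map_sub, _root_.map_smul]
      have hBww : B w w = β^2 * μ a + α^2 * μ b := by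
        rw [hBw]
        simp only [ContinuousLinearMap.sub_apply, ContinuousLinearMap.smul_apply,
          smul_eq_mul, hμ a, hμ b, hiaw, hibw]
        ring
      have hBξξ : B ξ ξ = s⁻¹ * (β^2 * μ a + α^2 * μ b) := by
        simp only [hξ, _root_.map_smul, ContinuousLinearMap.smul_apply, smul_eq_mul]
        rw [hBww]
        have : ‖w‖⁻¹ * (‖w‖⁻¹ * (β^2 * μ a + α^2 * μ b))
            = (‖w‖ * ‖w‖)⁻¹ * (β^2 * μ a + α^2 * μ b) := by
          rw [mul_inv]; ring
        rw [this, hwnorm]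
      have hkey := hc0all x hx ξ hξn hξx
      have hle : B ξ ξ ≤ μ a := by
        rw [hBξξ, inv_mul_le_iff₀ hspos]
        have hba' : μ b ≤ μ a := by
          apply hmono
          rw [Fin.le_def, hln]
          simp only [ha]
          omega
        have h4 : α^2 * μ b ≤ α^2 * μ a := mul_le_mul_of_nonneg_left hba' (sq_nonneg α)
        have h5 : s * μ a = β^2 * μ a + α^2 * μ a := by rw [hs]; ring
        linarith
      calc c₀ ≤ ‖x‖ * B ξ ξ := hkey
        _ ≤ ‖x‖ * μ a := mul_le_mul_of_nonneg_left hle (norm_nonneg x)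
  have hlow : ∀ i : Fin n, i ≠ ln → c₀ ≤ ‖x‖ * μ i := by
    intro i hi
    have hia : i ≤ a := by
      rw [Fin.le_def]
      have h1 : (i : ℕ) < n := i.2
      have h2 : (i : ℕ) ≠ n - 1 := by
        intro h; exact hi (Fin.ext (by rw [h, hln]))
      simp only [ha]
      omega
    have := hmono i a hia
    calc c₀ ≤ ‖x‖ * μ a := hlowa
      _ ≤ ‖x‖ * μ i := mul_le_mul_of_nonneg_left this (norm_nonneg x)
  have hpos : ∀ i : Fin n, i ≠ ln → 0 < μ i := by
    intro i hi
    have := hlow i hi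
    nlinarith [norm_nonneg x]
  -- product over i ≠ ln
  set E := Finset.univ.erase ln with hE
  have hcardE : E.card = n - 1 := by
    rw [hE, Finset.card_erase_of_mem (Finset.mem_univ _), Finset.card_univ,
      Fintype.card_fin]
  set P : ℝ := ∏ i ∈ E, (‖x‖ * μ i) with hP
  have hPeq : P = ‖x‖ ^ (n-1) * ∏ i ∈ E, μ i := by
    rw [hP, Finset.prod_mul_distrib, Finset.prod_const, hcardE]
  have hPlb : c₀ ^ (n-1) ≤ P := by
    rw [← hcardE, ← Finset.prod_const]
    apply Finset.prod_le_prod (fun i _ => le_of_lt hc₀)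
    intro i hi
    exact hlow i (Finset.ne_of_mem_erase hi)
  have hPub : P ≤ C₀ ^ (n-1) := by
    rw [← hcardE, ← Finset.prod_const]
    apply Finset.prod_le_prod
    · intro i hi
      have h1 := hlow i (Finset.ne_of_mem_erase hi)
      linarith [hc₀.le]
    · intro i _; exact hupper i
  have hPpos : 0 < P := lt_of_lt_of_le hcpow hPlb
  have hEprodpos : 0 < ∏ i ∈ E, μ i :=
    Finset.prod_pos fun i hi => hpos i (Finset.ne_of_mem_erase hi)
  have hsplit : ∏ i, μ i = μ ln * ∏ i ∈ E, μ i :=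
    (Finset.mul_prod_erase Finset.univ μ (Finset.mem_univ ln)).symm
  have hquot : μ ln / ‖x‖ ^ (n-1) = (∏ i, μ i) / P := by
    rw [hsplit, hPeq, mul_comm (‖x‖ ^ (n-1)) _, ← mul_div_mul_right (μ ln) _ hEprodpos.ne']
    ring_nf
  have hglb := (hg (gradient u x)).1
  have hgub := (hg (gradient u x)).2
  have hgpos : 0 < g (gradient u x) := lt_of_lt_of_le hlam hglb
  refine ⟨fun i hi => ⟨le_trans (min_le_left _ _) (hlow i hi),
    le_trans (hupper i) (le_max_left _ _)⟩, ?_, ?_⟩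
  · rw [hquot, hprod]
    refine le_trans (min_le_right _ _) ?_
    exact div_le_div₀ hgpos.le hglb hPpos hPub
  · rw [hquot, hprod]
    refine le_trans ?_ (le_max_right _ _)
    exact div_le_div₀ (le_trans hlam.le hLam) hgub hcpow hPlb
end
end

section
/- (Partial Legendre transform.) Let n ≥ 2, b ∈ ℝ, and let ψ ∈ C³(ℝⁿ₊) be such that the (n−1)×(n−1) matrix D²_{x'}ψ(x) is positive definite for every x ∈ ℝⁿ₊, and such that the map Φ(x) = (∇_{x'}ψ(x), x_n) is a C² diffeomorphism from ℝⁿ₊ onto an open set U ⊂ ℝⁿ₊. Define ψ* : U → ℝ by ψ*(Φ(x)) = x'·∇_{x'}ψ(x) − ψ(x). If ψ satisfies det M_b[ψ](x) = 1 for all x ∈ ℝⁿ₊, then ψ* is C² on U and satisfies ∂²ψ*/∂y_n²(y) + b·(∂ψ*/∂y_n(y))/y_n + det D²_{y'}ψ*(y) = 0 for all y ∈ U. -/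
open MeasureTheory
open scoped ENNReal

noncomputable section

/-- The matrix `M_b[ψ](x)`: Hessian of `ψ`, with the `(n,n)` entry replaced by
`ψ_{x_n x_n} + b ψ_{x_n}/x_n`.  Here `ln` denotes the last index. -/
def Mb {n : ℕ} (b : ℝ) (ψ : Eu n → ℝ) (ln : Fin n) (x : Eu n) :
    Matrix (Fin n) (Fin n) ℝ :=
  Matrix.of fun i j =>
    if i = ln ∧ j = ln then pd2 ψ ln ln x + b * pd ψ ln x / x ln
    else pd2 ψ i j x

section Aux

lemma eu_expand {n : ℕ} (v : Eu n) : v = ∑ k, v k • EuclideanSpace.single k (1:ℝ) := by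
  ext j
  have : (∑ k, v k • EuclideanSpace.single k (1:ℝ)) j
      = ∑ k, (v k • EuclideanSpace.single k (1:ℝ)) j := by
      rw [WithLp.ofLp_sum]; exact Finset.sum_apply j _ _
  rw [this]
  simp [EuclideanSpace.single_apply]

lemma clm_apply_eq {n : ℕ} (L : Eu n →L[ℝ] ℝ) (v : Eu n) :
    L v = ∑ k, v k * L (EuclideanSpace.single k 1) := by
  conv_lhs => rw [eu_expand v]
  simp [map_sum]

lemma pd_congr_nhds {n : ℕ} {f g : Eu n → ℝ} {x : Eu n} (h : f =ᶠ[nhds x] g) (j : Fin n) :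
    pd f j x = pd g j x := by
  unfold pd; rw [Filter.EventuallyEq.fderiv_eq h]

lemma pd_coord {n : ℕ} (i j : Fin n) (x : Eu n) :
    pd (fun z : Eu n => z i) j x = if i = j then 1 else 0 := by
  have : pd (fun z : Eu n => z i) j x
      = fderiv ℝ (fun z : Eu n => EuclideanSpace.proj i z) x (EuclideanSpace.single j 1) := rfl
  rw [this, (EuclideanSpace.proj (𝕜 := ℝ) i).fderiv]
  simp [EuclideanSpace.single_apply]

lemma pd_comp {n : ℕ} {Φ : Eu n → Eu n} {f : Eu n → ℝ} {x : Eu n}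
    (hΦ : DifferentiableAt ℝ Φ x) (hf : DifferentiableAt ℝ f (Φ x)) (j : Fin n) :
    pd (fun z => f (Φ z)) j x = ∑ k, pd (fun z => Φ z k) j x * pd f k (Φ x) := by
  have h1 : fderiv ℝ (fun z => f (Φ z)) x = (fderiv ℝ f (Φ x)).comp (fderiv ℝ Φ x) :=
    fderiv_comp x hf hΦ
  have h2 : ∀ k, pd (fun z => Φ z k) j x
      = (fderiv ℝ Φ x (EuclideanSpace.single j 1)) k := by
    intro k
    have h3 : HasFDerivAt (fun z => EuclideanSpace.proj (𝕜 := ℝ) k (Φ z))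
        ((EuclideanSpace.proj (𝕜 := ℝ) k).comp (fderiv ℝ Φ x)) x :=
      (EuclideanSpace.proj (𝕜 := ℝ) k).hasFDerivAt.comp x hΦ.hasFDerivAt
    have h4 : fderiv ℝ (fun z => Φ z k) x
        = ((EuclideanSpace.proj (𝕜 := ℝ) k).comp (fderiv ℝ Φ x)) := h3.fderiv
    unfold pd
    rw [h4]; rfl
  have main : pd (fun z => f (Φ z)) j x
      = ∑ k, (fderiv ℝ Φ x (EuclideanSpace.single j 1)) k * pd f k (Φ x) := by
    unfold pd; rw [h1]
    exact clm_apply_eq (fderiv ℝ f (Φ x)) (fderiv ℝ Φ x (EuclideanSpace.single j 1))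
  rw [main]
  exact Finset.sum_congr rfl fun k _ => by rw [h2]

lemma pd_contDiffOn {n : ℕ} {f : Eu n → ℝ} {S : Set (Eu n)} {m N : WithTop ℕ∞}
    (h : ContDiffOn ℝ N f S) (hS : IsOpen S) (hmn : m + 1 ≤ N) (i : Fin n) :
    ContDiffOn ℝ m (pd f i) S := by
  have h1 : ContDiffOn ℝ m (fderiv ℝ f) S := h.fderiv_of_isOpen hS hmn
  exact (ContinuousLinearMap.apply ℝ ℝ
    (EuclideanSpace.single i (1:ℝ))).contDiff.comp_contDiffOn h1

lemma pd_sub {n : ℕ} {f g : Eu n → ℝ} {x : Eu n}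
    (hf : DifferentiableAt ℝ f x) (hg : DifferentiableAt ℝ g x) (j : Fin n) :
    pd (fun z => f z - g z) j x = pd f j x - pd g j x := by
  unfold pd; rw [fderiv_fun_sub hf hg]; rfl

lemma pd_neg {n : ℕ} (g : Eu n → ℝ) (j : Fin n) (x : Eu n) :
    pd (fun z => -g z) j x = -pd g j x := by
  unfold pd; rw [fderiv_fun_neg]; rfl

lemma pd_mul {n : ℕ} {f g : Eu n → ℝ} {x : Eu n}
    (hf : DifferentiableAt ℝ f x) (hg : DifferentiableAt ℝ g x) (j : Fin n) :
    pd (fun z => f z * g z) j x = f x * pd g j x + g x * pd f j x := by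
  unfold pd; rw [fderiv_fun_mul hf hg]; simp

lemma pd_sum {n : ℕ} {ι : Type*} {u : Finset ι} {A : ι → Eu n → ℝ} {x : Eu n}
    (h : ∀ i ∈ u, DifferentiableAt ℝ (A i) x) (j : Fin n) :
    pd (fun z => ∑ i ∈ u, A i z) j x = ∑ i ∈ u, pd (A i) j x := by
  unfold pd; rw [fderiv_fun_sum h]; simp

/-- The index equivalence `{k ≠ ln} ⊕ Unit ≃ Fin n`. -/
def eqv {n : ℕ} (ln : Fin n) : ({k : Fin n // k ≠ ln} ⊕ Unit) ≃ Fin n where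
  toFun := Sum.elim Subtype.val fun _ => ln
  invFun k := if h : k = ln then Sum.inr () else Sum.inl ⟨k, h⟩
  left_inv := by
    rintro (⟨k, hk⟩ | ⟨⟩)
    · simp [hk]
    · simp
  right_inv k := by by_cases h : k = ln <;> simp [h]

end Aux

theorem stmt10 (n : ℕ) (hn : 2 ≤ n) (ln : Fin n) (hln : (ln : ℕ) = n - 1) (b : ℝ)
    (ψ : Eu n → ℝ)
    -- ψ ∈ C³(ℝⁿ₊)
    (hC3 : ContDiffOn ℝ 3 ψ {x : Eu n | 0 < x ln})
    -- D²_{x'}ψ is positive definite on ℝⁿ₊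
    (hpos : ∀ x : Eu n, 0 < x ln →
      (Matrix.of fun (i j : {k : Fin n // k ≠ ln}) => pd2 ψ i.1 j.1 x).PosDef)
    -- Φ(x) = (∇_{x'}ψ(x), x_n)
    (Φ : Eu n → Eu n)
    (hΦdef : ∀ x : Eu n, 0 < x ln →
      Φ x = (EuclideanSpace.equiv (Fin n) ℝ).symm
        (fun i => if i = ln then x ln else pd ψ i x))
    -- Φ is a C² diffeomorphism from ℝⁿ₊ onto the open set U ⊆ ℝⁿ₊, with inverse Ψ
    (U : Set (Eu n)) (hUopen : IsOpen U) (hUsub : U ⊆ {x : Eu n | 0 < x ln})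
    (Ψ : Eu n → Eu n)
    (hmaps : ∀ x : Eu n, 0 < x ln → Φ x ∈ U)
    (hinv1 : ∀ x : Eu n, 0 < x ln → Ψ (Φ x) = x)
    (hinv2 : ∀ y ∈ U, 0 < Ψ y ln ∧ Φ (Ψ y) = y)
    (hΦC2 : ContDiffOn ℝ 2 Φ {x : Eu n | 0 < x ln})
    (hΨC2 : ContDiffOn ℝ 2 Ψ U)
    -- ψ*(Φ(x)) = x'·∇_{x'}ψ(x) − ψ(x)
    (ψs : Eu n → ℝ)
    (hψs : ∀ x : Eu n, 0 < x ln →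
      ψs (Φ x) = (∑ i ∈ Finset.univ.erase ln, x i * pd ψ i x) - ψ x)
    -- det M_b[ψ] = 1 on ℝⁿ₊
    (heq : ∀ x : Eu n, 0 < x ln → (Mb b ψ ln x).det = 1) :
    -- then ψ* is C² on U and solves ψ*_{nn} + b ψ*_n / y_n + det D²_{y'}ψ* = 0 there
    ContDiffOn ℝ 2 ψs U ∧
    ∀ y ∈ U, pd2 ψs ln ln y + b * pd ψs ln y / y ln +
      (Matrix.of fun (i j : {k : Fin n // k ≠ ln}) => pd2 ψs i.1 j.1 y).det = 0 := by
  classical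
  set S : Set (Eu n) := {x : Eu n | 0 < x ln} with hSdef
  have hS : IsOpen S := by
    have h : S = (fun x : Eu n => EuclideanSpace.proj (𝕜 := ℝ) ln x) ⁻¹' Set.Ioi 0 := rfl
    rw [h]
    exact IsOpen.preimage (EuclideanSpace.proj (𝕜 := ℝ) ln).continuous isOpen_Ioi
  have hψC2 : ContDiffOn ℝ 2 ψ S := hC3.of_le (by norm_num)
  have hpdψ : ∀ i, ContDiffOn ℝ 2 (pd ψ i) S :=
    fun i => pd_contDiffOn hC3 hS (by norm_num) i
  have hdiffψ : ∀ x ∈ S, DifferentiableAt ℝ ψ x := fun x hx =>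
    (hψC2.differentiableOn (by norm_num)).differentiableAt (hS.mem_nhds hx)
  have hdiffpdψ : ∀ i, ∀ x ∈ S, DifferentiableAt ℝ (pd ψ i) x := fun i x hx =>
    ((hpdψ i).differentiableOn (by norm_num)).differentiableAt (hS.mem_nhds hx)
  have hdiffΦ : ∀ x ∈ S, DifferentiableAt ℝ Φ x := fun x hx =>
    (hΦC2.differentiableOn (by norm_num)).differentiableAt (hS.mem_nhds hx)
  -- components of Φ
  have hΦcoords : ∀ x ∈ S, ∀ k, Φ x k = if k = ln then x ln else pd ψ k x := by
    intro x hx k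
    rw [hΦdef x hx]
    rfl
  -- the function F
  have hcoordC : ∀ i : Fin n, ContDiffOn ℝ 2 (fun z : Eu n => z i) S :=
    fun i => (EuclideanSpace.proj (𝕜 := ℝ) i).contDiff.contDiffOn
  have hFC2 : ContDiffOn ℝ 2
      (fun z : Eu n => (∑ i ∈ Finset.univ.erase ln, z i * pd ψ i z) - ψ z) S := by
    refine ContDiffOn.sub ?_ hψC2
    refine ContDiffOn.sum fun i _ => ?_
    exact (hcoordC i).mul (hpdψ i)
  -- ψs is C² on U
  have hΨmaps : Set.MapsTo Ψ U S := fun y hy => (hinv2 y hy).1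
  have hψseq : ∀ y ∈ U, ψs y =
      (fun z : Eu n => (∑ i ∈ Finset.univ.erase ln, z i * pd ψ i z) - ψ z) (Ψ y) := by
    intro y hy
    have h1 := hψs (Ψ y) (hinv2 y hy).1
    rw [(hinv2 y hy).2] at h1
    exact h1
  have hψsC2 : ContDiffOn ℝ 2 ψs U := (hFC2.comp hΨC2 hΨmaps).congr hψseq
  have hdiffψs : ∀ y ∈ U, DifferentiableAt ℝ ψs y := fun y hy =>
    (hψsC2.differentiableOn (by norm_num)).differentiableAt (hUopen.mem_nhds hy)
  have hpdψs : ∀ k, ContDiffOn ℝ 1 (pd ψs k) U :=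
    fun k => pd_contDiffOn hψsC2 hUopen (by norm_num) k
  have hdiffpdψs : ∀ k, ∀ y ∈ U, DifferentiableAt ℝ (pd ψs k) y := fun k y hy =>
    ((hpdψs k).differentiableOn (by norm_num)).differentiableAt (hUopen.mem_nhds hy)
  -- derivative of components of Φ
  have hA : ∀ x ∈ S, ∀ j k : Fin n, pd (fun z => Φ z k) j x
      = if k = ln then (if ln = j then 1 else 0) else pd2 ψ j k x := by
    intro x hx j k
    have hev : (fun z => Φ z k) =ᶠ[nhds x] (fun z => if k = ln then z ln else pd ψ k z) := by
      filter_upwards [hS.mem_nhds hx] with z hz using hΦcoords z hz k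
    rw [pd_congr_nhds hev j]
    by_cases hk : k = ln
    · subst hk
      have h1 : (fun z : Eu n => if k = k then z k else pd ψ k z) = fun z : Eu n => z k := by
        funext z; rw [if_pos rfl]
      rw [if_pos rfl, h1, pd_coord]
    · have h1 : (fun z : Eu n => if k = ln then z ln else pd ψ k z) = pd ψ k := by
        funext z; rw [if_neg hk]
      rw [if_neg hk, h1]
      rfl
  -- chain rule along Φ
  have hchain : ∀ x ∈ S, ∀ f : Eu n → ℝ, DifferentiableAt ℝ f (Φ x) → ∀ j,
      pd (fun z => f (Φ z)) j x
        = (∑ k ∈ Finset.univ.erase ln, pd2 ψ j k x * pd f k (Φ x))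
          + (if ln = j then 1 else 0) * pd f ln (Φ x) := by
    intro x hx f hf j
    rw [pd_comp (hdiffΦ x hx) hf j,
      ← Finset.sum_erase_add Finset.univ _ (Finset.mem_univ ln)]
    congr 1
    · refine Finset.sum_congr rfl fun k hk => ?_
      have hk' : k ≠ ln := (Finset.mem_erase.1 hk).1
      rw [hA x hx j k, if_neg hk']
    · rw [hA x hx j ln, if_pos rfl]
  -- derivative of F
  have hpdF : ∀ x ∈ S, ∀ j,
      pd (fun z : Eu n => (∑ i ∈ Finset.univ.erase ln, z i * pd ψ i z) - ψ z) j x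
      = (∑ i ∈ Finset.univ.erase ln, (x i * pd2 ψ j i x + (if i = j then pd ψ i x else 0)))
        - pd ψ j x := by
    intro x hx j
    have hterm : ∀ i ∈ Finset.univ.erase ln,
        DifferentiableAt ℝ (fun z : Eu n => z i * pd ψ i z) x := fun i _ =>
      ((EuclideanSpace.proj (𝕜 := ℝ) i).differentiable.differentiableAt).mul
        (hdiffpdψ i x hx)
    have hsumd : DifferentiableAt ℝ
        (fun z : Eu n => ∑ i ∈ Finset.univ.erase ln, z i * pd ψ i z) x := by
      exact DifferentiableAt.fun_sum hterm
    rw [pd_sub hsumd (hdiffψ x hx) j, pd_sum hterm j]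
    congr 1
    refine Finset.sum_congr rfl fun i _ => ?_
    have hfi : DifferentiableAt ℝ (fun z : Eu n => z i) x :=
      (EuclideanSpace.proj (𝕜 := ℝ) i).differentiable.differentiableAt
    rw [pd_mul hfi (hdiffpdψ i x hx) j, pd_coord]
    have : pd (pd ψ i) j x = pd2 ψ j i x := rfl
    rw [this]
    by_cases hij : i = j <;> simp [hij]
  -- first-order identity obtained from the chain rule
  have hEq1 : ∀ x ∈ S, ∀ j,
      (∑ k ∈ Finset.univ.erase ln, pd2 ψ j k x * pd ψs k (Φ x))
        + (if ln = j then 1 else 0) * pd ψs ln (Φ x)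
      = (∑ i ∈ Finset.univ.erase ln, (x i * pd2 ψ j i x + (if i = j then pd ψ i x else 0)))
        - pd ψ j x := by
    intro x hx j
    have hev : (fun z => ψs (Φ z)) =ᶠ[nhds x]
        (fun z : Eu n => (∑ i ∈ Finset.univ.erase ln, z i * pd ψ i z) - ψ z) := by
      filter_upwards [hS.mem_nhds hx] with z hz using hψs z hz
    rw [← hchain x hx ψs (hdiffψs _ (hmaps x hx)) j, pd_congr_nhds hev j, hpdF x hx j]
  -- sum over subtype vs sum over erase
  have hsub : ∀ g : Fin n → ℝ,
      (∑ m : {k : Fin n // k ≠ ln}, g m.1) = ∑ m ∈ Finset.univ.erase ln, g m := by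
    intro g
    exact (Finset.sum_subtype (Finset.univ.erase ln)
      (fun x => by simp [Finset.mem_erase]) g).symm
  -- first-order relations
  have hR1 : ∀ x ∈ S, ∀ k, k ≠ ln → pd ψs k (Φ x) = x k := by
    intro x hx
    set w : {k : Fin n // k ≠ ln} → ℝ := fun k => pd ψs k.1 (Φ x) - x k.1 with hwdef
    have key : ∀ j : Fin n, j ≠ ln →
        (∑ m ∈ Finset.univ.erase ln, pd2 ψ j m x * pd ψs m (Φ x))
        = ∑ m ∈ Finset.univ.erase ln, x m * pd2 ψ j m x := by
      intro j hj
      have h1 := hEq1 x hx j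
      rw [if_neg (fun h => hj h.symm), zero_mul, add_zero, Finset.sum_add_distrib] at h1
      rw [Finset.sum_ite_eq' (Finset.univ.erase ln) j (fun i => pd ψ i x)] at h1
      rw [if_pos (by simp [Finset.mem_erase, hj])] at h1
      linarith [h1]
    have hmv : (Matrix.of fun (i j : {k : Fin n // k ≠ ln}) => pd2 ψ i.1 j.1 x).mulVec w = 0 := by
      funext j
      have h2 : ((Matrix.of fun (i j : {k : Fin n // k ≠ ln}) => pd2 ψ i.1 j.1 x).mulVec w) j
          = ∑ m : {k : Fin n // k ≠ ln},
              pd2 ψ j.1 m.1 x * (pd ψs m.1 (Φ x) - x m.1) := by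
        simp [Matrix.mulVec, dotProduct, hwdef]
      rw [h2, hsub (fun m => pd2 ψ j.1 m x * (pd ψs m (Φ x) - x m))]
      have h3 : ∑ m ∈ Finset.univ.erase ln, pd2 ψ j.1 m x * (pd ψs m (Φ x) - x m)
          = (∑ m ∈ Finset.univ.erase ln, pd2 ψ j.1 m x * pd ψs m (Φ x))
            - ∑ m ∈ Finset.univ.erase ln, x m * pd2 ψ j.1 m x := by
        rw [← Finset.sum_sub_distrib]
        exact Finset.sum_congr rfl fun m _ => by ring
      rw [h3, key j.1 j.2]
      simp
    have hw0 : w = 0 := by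
      by_contra hne
      have h4 := (hpos x hx).dotProduct_mulVec_pos hne
      rw [hmv] at h4
      simp at h4
    intro k hk
    have h5 : w ⟨k, hk⟩ = 0 := by rw [hw0]; rfl
    have h6 : pd ψs k (Φ x) - x k = 0 := h5
    linarith
  have hR2 : ∀ x ∈ S, pd ψs ln (Φ x) = -pd ψ ln x := by
    intro x hx
    have h1 := hEq1 x hx ln
    rw [if_pos rfl, one_mul, Finset.sum_add_distrib] at h1
    have h2 : ∑ i ∈ Finset.univ.erase ln, (if i = ln then pd ψ i x else 0) = 0 := by
      refine Finset.sum_eq_zero fun i hi => ?_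
      rw [if_neg (Finset.mem_erase.1 hi).1]
    rw [h2, add_zero] at h1
    have h3 : (∑ k ∈ Finset.univ.erase ln, pd2 ψ ln k x * pd ψs k (Φ x))
        = ∑ i ∈ Finset.univ.erase ln, x i * pd2 ψ ln i x := by
      refine Finset.sum_congr rfl fun k hk => ?_
      rw [hR1 x hx k (Finset.mem_erase.1 hk).1]
      ring
    rw [h3] at h1
    linarith
  -- second-order relations
  have hEq2 : ∀ x ∈ S, ∀ j k,
      (∑ m ∈ Finset.univ.erase ln, pd2 ψ j m x * pd2 ψs m k (Φ x))
        + (if ln = j then 1 else 0) * pd2 ψs ln k (Φ x)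
      = (if k = ln then -pd2 ψ j ln x else (if k = j then 1 else 0)) := by
    intro x hx j k
    have hch := hchain x hx (pd ψs k) (hdiffpdψs k _ (hmaps x hx)) j
    have hlhs : (∑ m ∈ Finset.univ.erase ln, pd2 ψ j m x * pd2 ψs m k (Φ x))
        + (if ln = j then 1 else 0) * pd2 ψs ln k (Φ x)
        = pd (fun z => pd ψs k (Φ z)) j x := by
      rw [hch]; rfl
    rw [hlhs]
    by_cases hk : k = ln
    · subst hk
      have hev : (fun z => pd ψs k (Φ z)) =ᶠ[nhds x] (fun z => -pd ψ k z) := by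
        filter_upwards [hS.mem_nhds hx] with z hz using hR2 z hz
      rw [pd_congr_nhds hev j, if_pos rfl, pd_neg]
      rfl
    · have hev : (fun z => pd ψs k (Φ z)) =ᶠ[nhds x] (fun z => z k) := by
        filter_upwards [hS.mem_nhds hx] with z hz using hR1 z hz k hk
      rw [pd_congr_nhds hev j, if_neg hk, pd_coord]
  -- the conclusion
  refine ⟨hψsC2, fun y hy => ?_⟩
  have hx : Ψ y ∈ S := (hinv2 y hy).1
  set x := Ψ y with hxdef
  have hyx : Φ x = y := (hinv2 y hy).2
  have hxS : (0:ℝ) < x ln := hx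
  have hyln : y ln = x ln := by rw [← hyx, hΦcoords x hx ln, if_pos rfl]
  have hE : ∀ j k,
      (∑ m ∈ Finset.univ.erase ln, pd2 ψ j m x * pd2 ψs m k y)
        + (if ln = j then 1 else 0) * pd2 ψs ln k y
      = (if k = ln then -pd2 ψ j ln x else (if k = j then 1 else 0)) := by
    intro j k
    have h := hEq2 x hx j k
    rwa [hyx] at h
  set H : Matrix {k : Fin n // k ≠ ln} {k : Fin n // k ≠ ln} ℝ :=
    Matrix.of fun i j => pd2 ψ i.1 j.1 x with hHdef
  set Bp : Matrix {k : Fin n // k ≠ ln} {k : Fin n // k ≠ ln} ℝ :=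
    Matrix.of fun i j => pd2 ψs i.1 j.1 y with hBdef
  have hHB : H * Bp = 1 := by
    ext i j
    rw [Matrix.mul_apply]
    have h1 : ∑ m : {k : Fin n // k ≠ ln}, H i m * Bp m j
        = ∑ m ∈ Finset.univ.erase ln, pd2 ψ i.1 m x * pd2 ψs m j.1 y :=
      hsub (fun m => pd2 ψ i.1 m x * pd2 ψs m j.1 y)
    rw [h1]
    have h2 := hE i.1 j.1
    rw [if_neg (fun h => i.2 h.symm), zero_mul, add_zero, if_neg j.2] at h2
    rw [h2, Matrix.one_apply]
    by_cases hij : i = j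
    · rw [if_pos hij, if_pos (congrArg Subtype.val hij).symm]
    · rw [if_neg hij, if_neg (fun h => hij (Subtype.ext h.symm))]
  set v : Matrix {k : Fin n // k ≠ ln} Unit ℝ :=
    Matrix.of fun m _ => pd2 ψs m.1 ln y with hvdef
  set c1 : Matrix {k : Fin n // k ≠ ln} Unit ℝ :=
    Matrix.of fun i _ => pd2 ψ i.1 ln x with hc1def
  set r1 : Matrix Unit {k : Fin n // k ≠ ln} ℝ :=
    Matrix.of fun _ j => pd2 ψ ln j.1 x with hr1def
  set dd : Matrix Unit Unit ℝ :=
    Matrix.of fun _ _ => pd2 ψ ln ln x + b * pd ψ ln x / x ln with hdddef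
  have hMbsub : (Mb b ψ ln x).submatrix (eqv ln) (eqv ln) = Matrix.fromBlocks H c1 r1 dd := by
    ext i j
    rcases i with i | u
    · rcases j with j | u'
      · simp [Mb, Matrix.fromBlocks, eqv, Matrix.submatrix_apply, i.2, hHdef]
      · simp [Mb, Matrix.fromBlocks, eqv, Matrix.submatrix_apply, i.2, hc1def]
    · rcases j with j | u'
      · simp [Mb, Matrix.fromBlocks, eqv, Matrix.submatrix_apply, j.2, hr1def]
      · simp [Mb, Matrix.fromBlocks, eqv, Matrix.submatrix_apply, hdddef]
  have hdet1 : (Matrix.fromBlocks H c1 r1 dd).det = 1 := by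
    rw [← hMbsub, Matrix.det_submatrix_equiv_self, heq x hxS]
  have hHv : H * v + c1 = 0 := by
    ext i u
    rw [Matrix.add_apply, Matrix.mul_apply]
    have h1 : ∑ m : {k : Fin n // k ≠ ln}, H i m * v m u
        = ∑ m ∈ Finset.univ.erase ln, pd2 ψ i.1 m x * pd2 ψs m ln y :=
      hsub (fun m => pd2 ψ i.1 m x * pd2 ψs m ln y)
    rw [h1]
    have h2 := hE i.1 ln
    rw [if_neg (fun h => i.2 h.symm), zero_mul, add_zero, if_pos rfl] at h2
    rw [h2]
    simp [hc1def]
  have hrd : r1 * v + dd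
      = Matrix.of fun _ _ => -(pd2 ψs ln ln y + b * pd ψs ln y / y ln) := by
    ext u u'
    rw [Matrix.add_apply, Matrix.mul_apply]
    have h1 : ∑ m : {k : Fin n // k ≠ ln}, r1 u m * v m u'
        = ∑ m ∈ Finset.univ.erase ln, pd2 ψ ln m x * pd2 ψs m ln y :=
      hsub (fun m => pd2 ψ ln m x * pd2 ψs m ln y)
    rw [h1]
    have h2 := hE ln ln
    rw [if_pos rfl, one_mul, if_pos rfl] at h2
    have h3 : ∑ m ∈ Finset.univ.erase ln, pd2 ψ ln m x * pd2 ψs m ln y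
        = -pd2 ψ ln ln x - pd2 ψs ln ln y := by linarith
    have h4 : pd ψs ln y = -pd ψ ln x := by
      have := hR2 x hx
      rwa [hyx] at this
    have h5 : dd u u' = pd2 ψ ln ln x + b * pd ψ ln x / x ln := rfl
    rw [h3, h5]
    have h6 : (Matrix.of fun (_ _ : Unit) =>
        -(pd2 ψs ln ln y + b * pd ψs ln y / y ln)) u u'
        = -(pd2 ψs ln ln y + b * pd ψs ln y / y ln) := rfl
    rw [h6, h4, hyln]
    ring
  have hprod : Matrix.fromBlocks H c1 r1 dd
        * Matrix.fromBlocks 1 v (0 : Matrix Unit {k : Fin n // k ≠ ln} ℝ) 1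
      = Matrix.fromBlocks H (0 : Matrix {k : Fin n // k ≠ ln} Unit ℝ) r1
          (Matrix.of fun _ _ => -(pd2 ψs ln ln y + b * pd ψs ln y / y ln)) := by
    rw [Matrix.fromBlocks_multiply]
    simp only [Matrix.mul_one, Matrix.mul_zero, add_zero]
    rw [hHv, hrd]
  have hdetprod : H.det * -(pd2 ψs ln ln y + b * pd ψs ln y / y ln) = 1 := by
    have h7 : (Matrix.fromBlocks H c1 r1 dd
        * Matrix.fromBlocks 1 v (0 : Matrix Unit {k : Fin n // k ≠ ln} ℝ) 1).det
        = H.det * -(pd2 ψs ln ln y + b * pd ψs ln y / y ln) := by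
      rw [hprod, Matrix.det_fromBlocks_zero₁₂,
        Matrix.det_unique (Matrix.of fun (_ _ : Unit) =>
          -(pd2 ψs ln ln y + b * pd ψs ln y / y ln))]
      rfl
    have h8 : (Matrix.fromBlocks H c1 r1 dd
        * Matrix.fromBlocks 1 v (0 : Matrix Unit {k : Fin n // k ≠ ln} ℝ) 1).det = 1 := by
      rw [Matrix.det_mul, hdet1, one_mul, Matrix.det_fromBlocks_zero₂₁,
        Matrix.det_one, Matrix.det_one, mul_one]
    exact h7.symm.trans h8
  have hdetH : (0:ℝ) < H.det := by
    rw [hHdef]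
    exact (hpos x hxS).det_pos
  have hdetB : H.det * Bp.det = 1 := by
    rw [← Matrix.det_mul, hHB, Matrix.det_one]
  have hfinal : H.det * (pd2 ψs ln ln y + b * pd ψs ln y / y ln + Bp.det) = 0 := by
    linear_combination (-1 : ℝ) * hdetprod + hdetB
  rcases mul_eq_zero.1 hfinal with h | h
  · exact absurd h hdetH.ne'
  · exact h
end
end

section
/- Let ε ∈ (0,1) and define u : ℝ² → ℝ by u(x,y) = x²/2 + |y|^{1+ε}/((1+ε)ε). Then: (i) u is strictly convex on ℝ²; (ii) for every (x,y) with y ≠ 0 one has (u_{xx}(x,y) − 1 + |y|^{1−ε})·u_{yy}(x,y) − u_{xy}(x,y)² = 1; (iii) u is not C^{1,1}: the gradient of u is not Lipschitz on any neighborhood of the line {y = 0}. -/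
open MeasureTheory
open scoped ENNReal

noncomputable section

namespace Stmt11Aux

open Real Filter

/-- The derivative of `t ↦ |t|^(1+ε)/((1+ε)ε)`, away from `0`. -/
def Gf (ε y : ℝ) : ℝ := Real.sign y * |y| ^ ε / ε

lemma g_hasDerivAt {ε : ℝ} (hε : ε ∈ Set.Ioo (0:ℝ) 1) {y : ℝ} (hy : y ≠ 0) :
    HasDerivAt (fun t : ℝ => |t| ^ (1+ε) / ((1+ε)*ε)) (Gf ε y) y := by
  obtain ⟨hε0, hε1⟩ := hε
  rcases hy.lt_or_gt with h | h
  · have hd : HasDerivAt (fun t : ℝ => (-t) ^ (1+ε) / ((1+ε)*ε))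
        (((1+ε) * (-y) ^ (1+ε-1) * (-1)) / ((1+ε)*ε)) y := by
      have h1 := (Real.hasDerivAt_rpow_const (x := -y) (p := 1+ε)
        (Or.inl (by linarith))).comp y (hasDerivAt_neg y)
      exact h1.div_const _
    have heq : (fun t : ℝ => |t| ^ (1+ε) / ((1+ε)*ε))
        =ᶠ[nhds y] (fun t : ℝ => (-t) ^ (1+ε) / ((1+ε)*ε)) := by
      filter_upwards [gt_mem_nhds h] with t ht
      rw [abs_of_neg ht]
    have := hd.congr_of_eventuallyEq heq
    refine this.congr_deriv ?_
    symm
    rw [Gf, Real.sign_of_neg h, abs_of_neg h, show (1:ℝ)+ε-1 = ε by ring]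
    field_simp
  · have hd : HasDerivAt (fun t : ℝ => t ^ (1+ε) / ((1+ε)*ε))
        (((1+ε) * y ^ (1+ε-1)) / ((1+ε)*ε)) y :=
      (Real.hasDerivAt_rpow_const (x := y) (p := 1+ε) (Or.inl (by linarith))).div_const _
    have heq : (fun t : ℝ => |t| ^ (1+ε) / ((1+ε)*ε))
        =ᶠ[nhds y] (fun t : ℝ => t ^ (1+ε) / ((1+ε)*ε)) := by
      filter_upwards [lt_mem_nhds h] with t ht
      rw [abs_of_pos ht]
    have := hd.congr_of_eventuallyEq heq
    refine this.congr_deriv ?_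
    symm
    rw [Gf, Real.sign_of_pos h, abs_of_pos h, show (1:ℝ)+ε-1 = ε by ring]
    field_simp

lemma G_hasDerivAt {ε : ℝ} (hε : ε ∈ Set.Ioo (0:ℝ) 1) {y : ℝ} (hy : y ≠ 0) :
    HasDerivAt (Gf ε) (|y| ^ (ε-1)) y := by
  obtain ⟨hε0, hε1⟩ := hε
  rcases hy.lt_or_gt with h | h
  · have hd : HasDerivAt (fun t : ℝ => -((-t) ^ ε) / ε)
        ((-(ε * (-y) ^ (ε-1) * (-1))) / ε) y := by
      have h1 := (Real.hasDerivAt_rpow_const (x := -y) (p := ε)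
        (Or.inl (by linarith))).comp y (hasDerivAt_neg y)
      exact h1.neg.div_const _
    have heq : Gf ε =ᶠ[nhds y] (fun t : ℝ => -((-t) ^ ε) / ε) := by
      filter_upwards [gt_mem_nhds h] with t ht
      rw [Gf, Real.sign_of_neg ht, abs_of_neg ht]
      ring
    have := hd.congr_of_eventuallyEq heq
    refine this.congr_deriv ?_
    symm
    rw [abs_of_neg h]
    field_simp
  · have hd : HasDerivAt (fun t : ℝ => t ^ ε / ε) ((ε * y ^ (ε-1)) / ε) y :=
      (Real.hasDerivAt_rpow_const (x := y) (p := ε) (Or.inl (by linarith))).div_const _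
    have heq : Gf ε =ᶠ[nhds y] (fun t : ℝ => t ^ ε / ε) := by
      filter_upwards [lt_mem_nhds h] with t ht
      rw [Gf, Real.sign_of_pos ht, abs_of_pos ht, one_mul]
    have := hd.congr_of_eventuallyEq heq
    refine this.congr_deriv ?_
    symm
    rw [abs_of_pos h]
    field_simp

def π0 : Eu 2 →L[ℝ] ℝ := EuclideanSpace.proj (0 : Fin 2)
def π1 : Eu 2 →L[ℝ] ℝ := EuclideanSpace.proj (1 : Fin 2)

lemma u_hasFDerivAt {ε : ℝ} (hε : ε ∈ Set.Ioo (0:ℝ) 1) (u : Eu 2 → ℝ)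
    (hu : ∀ p : Eu 2, u p = (p 0) ^ 2 / 2 + |p 1| ^ (1 + ε) / ((1 + ε) * ε))
    {p : Eu 2} (hp : p 1 ≠ 0) :
    HasFDerivAt u ((p 0) • π0 + Gf ε (p 1) • π1) p := by
  have h0 : HasFDerivAt (fun q : Eu 2 => (q 0 : ℝ) ^ 2 / 2) ((p 0) • π0) p := by
    have hsq : HasDerivAt (fun t : ℝ => t ^ 2 / 2) (p 0) (p 0) := by
      simpa using (hasDerivAt_pow 2 (p 0)).div_const 2
    exact hsq.comp_hasFDerivAt p (π0.hasFDerivAt)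
  have h1 : HasFDerivAt (fun q : Eu 2 => |q 1| ^ (1+ε) / ((1+ε)*ε))
      (Gf ε (p 1) • π1) p := by
    have h := (g_hasDerivAt hε hp).comp_hasFDerivAt p (π1.hasFDerivAt)
    exact h
  have := h0.add h1
  have hueq : u = fun q : Eu 2 => (q 0 : ℝ)^2/2 + |q 1| ^ (1+ε) / ((1+ε)*ε) :=
    funext hu
  rw [hueq]
  exact this

lemma nhd_ne {p : Eu 2} (hp : p 1 ≠ 0) : ∀ᶠ q : Eu 2 in nhds p, q 1 ≠ 0 := by
  have : IsOpen {q : Eu 2 | q 1 ≠ 0} := by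
    have : Continuous (fun q : Eu 2 => q 1) := π1.continuous
    exact isOpen_compl_singleton.preimage this
  exact this.eventually_mem hp

variable {ε : ℝ} (hε : ε ∈ Set.Ioo (0:ℝ) 1) (u : Eu 2 → ℝ)
    (hu : ∀ p : Eu 2, u p = (p 0) ^ 2 / 2 + |p 1| ^ (1 + ε) / ((1 + ε) * ε))
include hε hu

lemma pd_u_eq {q : Eu 2} (hq : q 1 ≠ 0) (i : Fin 2) :
    pd u i q = q 0 * (EuclideanSpace.single i (1:ℝ)) 0
      + Gf ε (q 1) * (EuclideanSpace.single i (1:ℝ)) 1 := by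
  rw [pd, (u_hasFDerivAt hε u hu hq).fderiv]
  simp [π0, π1]

lemma pd_u0 {q : Eu 2} (hq : q 1 ≠ 0) : pd u 0 q = q 0 := by
  rw [pd_u_eq hε u hu hq]
  simp [EuclideanSpace.single_apply]

lemma pd_u1 {q : Eu 2} (hq : q 1 ≠ 0) : pd u 1 q = Gf ε (q 1) := by
  rw [pd_u_eq hε u hu hq]
  simp [EuclideanSpace.single_apply]

lemma pd2_00 {p : Eu 2} (hp : p 1 ≠ 0) : pd2 u 0 0 p = 1 := by
  have heq : pd u 0 =ᶠ[nhds p] fun q : Eu 2 => π0 q := by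
    filter_upwards [nhd_ne hp] with q hq
    exact pd_u0 hε u hu hq
  rw [pd2, pd, heq.fderiv_eq, π0.fderiv]
  simp [π0, EuclideanSpace.single_apply]

lemma fderiv_pd1 {p : Eu 2} (hp : p 1 ≠ 0) :
    fderiv ℝ (pd u 1) p = |p 1| ^ (ε-1) • π1 := by
  have heq : pd u 1 =ᶠ[nhds p] fun q : Eu 2 => Gf ε (π1 q) := by
    filter_upwards [nhd_ne hp] with q hq
    exact pd_u1 hε u hu hq
  rw [heq.fderiv_eq]
  exact ((G_hasDerivAt hε hp).comp_hasFDerivAt p π1.hasFDerivAt).fderiv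

lemma pd2_11 {p : Eu 2} (hp : p 1 ≠ 0) : pd2 u 1 1 p = |p 1| ^ (ε-1) := by
  rw [pd2, pd, fderiv_pd1 hε u hu hp]
  simp [π1, EuclideanSpace.single_apply]

lemma pd2_01 {p : Eu 2} (hp : p 1 ≠ 0) : pd2 u 0 1 p = 0 := by
  rw [pd2, pd, fderiv_pd1 hε u hu hp]
  simp [π1, EuclideanSpace.single_apply]

omit hε hu

lemma g_le {a b x y : ℝ} (hε : ε ∈ Set.Ioo (0:ℝ) 1) (ha : 0 < a) (hb : 0 < b)
    (hab : a + b = 1) :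
    |a*x+b*y| ^ (1+ε) ≤ a * |x| ^ (1+ε) + b * |y| ^ (1+ε) := by
  have h1 : |a*x+b*y| ≤ a*|x|+b*|y| := by
    calc |a*x+b*y| ≤ |a*x| + |b*y| := abs_add_le _ _
    _ = a*|x|+b*|y| := by rw [abs_mul, abs_mul, abs_of_pos ha, abs_of_pos hb]
  have h2 : |a*x+b*y| ^ (1+ε) ≤ (a*|x|+b*|y|) ^ (1+ε) :=
    Real.rpow_le_rpow (abs_nonneg _) h1 (by linarith [hε.1])
  have h3 := (convexOn_rpow (p := 1+ε) (by linarith [hε.1])).2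
    (Set.mem_Ici.mpr (abs_nonneg x)) (Set.mem_Ici.mpr (abs_nonneg y))
    ha.le hb.le hab
  simp only [smul_eq_mul] at h3
  exact h2.trans h3

lemma g_lt {a b x y : ℝ} (hε : ε ∈ Set.Ioo (0:ℝ) 1) (ha : 0 < a) (hb : 0 < b)
    (hab : a + b = 1) (hxy : x ≠ y) :
    |a*x+b*y| ^ (1+ε) < a * |x| ^ (1+ε) + b * |y| ^ (1+ε) := by
  by_cases h : |x| = |y|
  · have hx0 : x ≠ 0 := by
      rintro rfl
      rw [abs_zero] at h
      exact hxy (abs_eq_zero.mp h.symm).symm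
    have hy : y = -x := by
      rcases abs_eq_abs.mp h with h' | h'
      · exact absurd h' hxy
      · linarith
    subst hy
    have hlt : |a*x + b*(-x)| < |x| := by
      rw [show a*x + b*(-x) = (a-b)*x by ring, abs_mul]
      have hab1 : |a - b| < 1 := abs_lt.mpr ⟨by linarith, by linarith⟩
      calc |a-b| * |x| < 1 * |x| := by
            exact mul_lt_mul_of_pos_right hab1 (abs_pos.mpr hx0)
      _ = |x| := one_mul _
    have h2 : |a*x+b*(-x)| ^ (1+ε) < |x| ^ (1+ε) :=
      Real.rpow_lt_rpow (abs_nonneg _) hlt (by linarith [hε.1])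
    calc |a*x+b*(-x)| ^ (1+ε) < |x| ^ (1+ε) := h2
    _ = a * |x| ^ (1+ε) + b * |(-x)| ^ (1+ε) := by rw [abs_neg, ← add_mul, hab, one_mul]
  · have h1 : |a*x+b*y| ≤ a*|x|+b*|y| := by
      calc |a*x+b*y| ≤ |a*x| + |b*y| := abs_add_le _ _
      _ = a*|x|+b*|y| := by rw [abs_mul, abs_mul, abs_of_pos ha, abs_of_pos hb]
    have h2 : |a*x+b*y| ^ (1+ε) ≤ (a*|x|+b*|y|) ^ (1+ε) :=
      Real.rpow_le_rpow (abs_nonneg _) h1 (by linarith [hε.1])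
    have h3 := (strictConvexOn_rpow (p := 1+ε) (by linarith [hε.1])).2
      (Set.mem_Ici.mpr (abs_nonneg x)) (Set.mem_Ici.mpr (abs_nonneg y)) h
      ha hb hab
    simp only [smul_eq_mul] at h3
    exact h2.trans_lt h3

end Stmt11Aux

open Stmt11Aux Real Filter in
theorem stmt11 (ε : ℝ) (hε : ε ∈ Set.Ioo (0 : ℝ) 1)
    (u : Eu 2 → ℝ)
    (hu : ∀ p : Eu 2, u p = (p 0) ^ 2 / 2 + |p 1| ^ (1 + ε) / ((1 + ε) * ε)) :
    -- (i) u is strictly convex on ℝ²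
    StrictConvexOn ℝ Set.univ u ∧
    -- (ii) (u_{xx} − 1 + |y|^{1−ε})·u_{yy} − u_{xy}² = 1 for y ≠ 0
    (∀ p : Eu 2, p 1 ≠ 0 →
      (pd2 u 0 0 p - 1 + |p 1| ^ (1 - ε)) * pd2 u 1 1 p - (pd2 u 0 1 p) ^ 2 = 1) ∧
    -- (iii) the gradient of u is not Lipschitz on any neighborhood of {y = 0}
    (∀ V : Set (Eu 2), IsOpen V → {p : Eu 2 | p 1 = 0} ⊆ V →
      ∀ L : NNReal, ¬ LipschitzOnWith L (fun p => fderiv ℝ u p) V) := by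
  obtain ⟨hε0, hε1⟩ := hε
  have hε' : ε ∈ Set.Ioo (0:ℝ) 1 := ⟨hε0, hε1⟩
  have hc : (0:ℝ) < (1+ε)*ε := by positivity
  refine ⟨?_, ?_, ?_⟩
  · -- (i) strict convexity
    refine ⟨convex_univ, ?_⟩
    intro p _ q _ hpq a b ha hb hab
    have hcoord : ∀ i : Fin 2, (a • p + b • q) i = a * p i + b * q i := by
      intro i
      simp [PiLp.add_apply, PiLp.smul_apply, smul_eq_mul]
    have hne : p 0 ≠ q 0 ∨ p 1 ≠ q 1 := by
      by_contra hcon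
      push_neg at hcon
      apply hpq
      ext i
      fin_cases i
      · exact hcon.1
      · exact hcon.2
    rw [hu, hu, hu, hcoord 0, hcoord 1]
    have hf_le : (a * p 0 + b * q 0)^2/2 ≤ a * ((p 0)^2/2) + b * ((q 0)^2/2) := by
      nlinarith [mul_pos ha hb, sq_nonneg (p 0 - q 0)]
    have hg_le : |a * p 1 + b * q 1| ^ (1+ε) / ((1+ε)*ε)
        ≤ a * (|p 1| ^ (1+ε) / ((1+ε)*ε)) + b * (|q 1| ^ (1+ε) / ((1+ε)*ε)) := by
      calc |a * p 1 + b * q 1| ^ (1+ε) / ((1+ε)*ε)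
          ≤ (a * |p 1| ^ (1+ε) + b * |q 1| ^ (1+ε)) / ((1+ε)*ε) := by
            gcongr
            exact g_le hε' ha hb hab
      _ = a * (|p 1| ^ (1+ε) / ((1+ε)*ε)) + b * (|q 1| ^ (1+ε) / ((1+ε)*ε)) := by ring
    rcases hne with hne | hne
    · have hf_lt : (a * p 0 + b * q 0)^2/2 < a * ((p 0)^2/2) + b * ((q 0)^2/2) := by
        have hsub : p 0 - q 0 ≠ 0 := sub_ne_zero.mpr hne
        have hsq : 0 < (p 0 - q 0)^2 := by positivity
        nlinarith [mul_pos ha hb]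
      simp only [smul_eq_mul]
      linarith
    · have hg_lt : |a * p 1 + b * q 1| ^ (1+ε) / ((1+ε)*ε)
          < a * (|p 1| ^ (1+ε) / ((1+ε)*ε)) + b * (|q 1| ^ (1+ε) / ((1+ε)*ε)) := by
        calc |a * p 1 + b * q 1| ^ (1+ε) / ((1+ε)*ε)
            < (a * |p 1| ^ (1+ε) + b * |q 1| ^ (1+ε)) / ((1+ε)*ε) := by
              gcongr
              exact g_lt hε' ha hb hab hne
        _ = a * (|p 1| ^ (1+ε) / ((1+ε)*ε)) + b * (|q 1| ^ (1+ε) / ((1+ε)*ε)) := by ring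
      simp only [smul_eq_mul]
      linarith
  · -- (ii)
    intro p hp
    rw [pd2_00 hε' u hu hp, pd2_11 hε' u hu hp, pd2_01 hε' u hu hp]
    have h : (0:ℝ) < |p 1| := abs_pos.mpr hp
    have hone : |p 1| ^ (1 - ε) * |p 1| ^ (ε - 1) = 1 := by
      rw [← Real.rpow_add h]
      norm_num
    linarith [hone]
  · -- (iii)
    intro V hV hVsub L hL
    -- ball around 0
    have h0V : (0 : Eu 2) ∈ V := hVsub (by simp)
    obtain ⟨δ, hδ0, hball⟩ := Metric.isOpen_iff.mp hV 0 h0V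
    set e : Eu 2 := EuclideanSpace.single (1 : Fin 2) (1:ℝ) with he
    have hecoord1 : ∀ t : ℝ, (t • e) 1 = t := by
      intro t
      simp [he, PiLp.smul_apply, EuclideanSpace.single_apply]
    have henorm : ‖e‖ = 1 := by
      rw [he, EuclideanSpace.norm_single]
      norm_num
    have hecoord0 : ∀ t : ℝ, (t • e) 0 = 0 := by
      intro t
      simp [he, PiLp.smul_apply, EuclideanSpace.single_apply]
    have hmem : ∀ t : ℝ, 0 < t → t < δ → (t • e) ∈ V := by
      intro t ht htδ
      apply hball
      rw [Metric.mem_ball, dist_zero_right, norm_smul, henorm, mul_one,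
        Real.norm_eq_abs, abs_of_pos ht]
      exact htδ
    have hfd : ∀ t : ℝ, 0 < t → (fderiv ℝ u (t • e)) e = t ^ ε / ε := by
      intro t ht
      have h1 : (t • e) 1 ≠ 0 := by rw [hecoord1]; exact ne_of_gt ht
      rw [(u_hasFDerivAt hε' u hu h1).fderiv]
      simp only [ContinuousLinearMap.add_apply, ContinuousLinearMap.coe_smul',
        Pi.smul_apply, smul_eq_mul]
      rw [hecoord0, hecoord1]
      have hπ0 : π0 e = 0 := by simp [π0, he, EuclideanSpace.single_apply]
      have hπ1 : π1 e = 1 := by simp [π1, he, EuclideanSpace.single_apply]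
      rw [hπ0, hπ1, Gf, Real.sign_of_pos ht, abs_of_pos ht]
      ring
    -- key inequality
    have key : ∀ t s : ℝ, 0 < t → t < δ → 0 < s → s < δ →
        |t ^ ε / ε - s ^ ε / ε| ≤ (L : ℝ) * |t - s| := by
      intro t s ht htδ hs hsδ
      have hmem_t := hmem t ht htδ
      have hmem_s := hmem s hs hsδ
      have hdist := hL.dist_le_mul _ hmem_t _ hmem_s
      have hdd : dist (t • e) (s • e) = |t - s| := by
        rw [dist_eq_norm, ← sub_smul, norm_smul, henorm, mul_one, Real.norm_eq_abs]
      have hop : |t ^ ε / ε - s ^ ε / ε|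
          ≤ dist (fderiv ℝ u (t • e)) (fderiv ℝ u (s • e)) := by
        rw [dist_eq_norm]
        have h1 := (fderiv ℝ u (t • e) - fderiv ℝ u (s • e)).le_opNorm e
        rw [ContinuousLinearMap.sub_apply, hfd t ht, hfd s hs] at h1
        rw [henorm, mul_one, Real.norm_eq_abs] at h1
        exact h1
      calc |t ^ ε / ε - s ^ ε / ε| ≤ dist (fderiv ℝ u (t • e)) (fderiv ℝ u (s • e)) := hop
      _ ≤ (L : ℝ) * dist (t • e) (s • e) := hdist
      _ = (L : ℝ) * |t - s| := by rw [hdd]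
    -- choose small t
    set κ : ℝ := 1 - (1/2:ℝ) ^ ε with hκdef
    have hκ : 0 < κ := by
      have := Real.rpow_lt_one (x := (1/2:ℝ)) (by norm_num) (by norm_num) hε0
      simp only [hκdef]
      linarith
    have htend : Tendsto (fun t : ℝ => (L:ℝ)/2 * t ^ (1-ε)) (nhdsWithin 0 (Set.Ioi 0))
        (nhds 0) := by
      have hcont : ContinuousAt (fun t : ℝ => t ^ (1-ε)) 0 :=
        Real.continuousAt_rpow_const 0 (1-ε) (Or.inr (by linarith))
      have h1 : Tendsto (fun t : ℝ => t ^ (1-ε)) (nhds 0) (nhds 0) := by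
        have := hcont.tendsto
        rwa [Real.zero_rpow (by linarith : (1:ℝ)-ε ≠ 0)] at this
      have h2 := (h1.const_mul ((L:ℝ)/2)).mono_left
        (nhdsWithin_le_nhds (s := Set.Ioi (0:ℝ)))
      simpa using h2
    have hev1 : ∀ᶠ t in nhdsWithin (0:ℝ) (Set.Ioi 0), (L:ℝ)/2 * t ^ (1-ε) < κ/ε :=
      htend.eventually_lt_const (by positivity)
    have hev2 : ∀ᶠ t in nhdsWithin (0:ℝ) (Set.Ioi 0), t < δ :=
      (gt_mem_nhds hδ0).filter_mono nhdsWithin_le_nhds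
    have hev3 : ∀ᶠ t in nhdsWithin (0:ℝ) (Set.Ioi 0), t ∈ Set.Ioi (0:ℝ) :=
      self_mem_nhdsWithin
    obtain ⟨t, h1, h2, h3⟩ := (hev1.and (hev2.and hev3)).exists
    obtain ⟨h2, h3⟩ := And.intro h2 h3
    have ht : 0 < t := h3
    have htδ : t < δ := h2
    have ht2 : 0 < t/2 := by linarith
    have ht2δ : t/2 < δ := by linarith
    have hkey := key t (t/2) ht htδ ht2 ht2δ
    have hhalf : (t/2) ^ ε = t ^ ε * (1/2:ℝ) ^ ε := by
      rw [show t/2 = t * (1/2) by ring, Real.mul_rpow ht.le (by norm_num)]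
    have hT : 0 < t ^ ε := Real.rpow_pos_of_pos ht ε
    have habs1 : |t ^ ε / ε - (t/2) ^ ε / ε| = t ^ ε * κ / ε := by
      rw [hhalf, abs_of_nonneg]
      · simp only [hκdef]; ring
      · have : t ^ ε / ε - t ^ ε * (1/2:ℝ) ^ ε / ε = t ^ ε * κ / ε := by
          simp only [hκdef]; ring
        rw [this]
        positivity
    have habs2 : |t - t/2| = t/2 := by
      rw [abs_of_nonneg (by linarith)]
      ring
    rw [habs1, habs2] at hkey
    -- hkey : t^ε * κ / ε ≤ L * (t/2)
    have hST : t ^ (1-ε) * t ^ ε = t := by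
      rw [← Real.rpow_add ht]
      norm_num
    have hstep : (L:ℝ)/2 * t ^ (1-ε) * t ^ ε < κ/ε * t ^ ε :=
      mul_lt_mul_of_pos_right h1 hT
    have heq1 : (L:ℝ)/2 * t ^ (1-ε) * t ^ ε = (L:ℝ) * (t/2) := by
      rw [mul_assoc, hST]; ring
    have heq2 : κ/ε * t ^ ε = t ^ ε * κ / ε := by ring
    linarith
end
end

section
/- Let n ≥ 2, b > 1, and p > n + b. Let u be bounded on ℝⁿ₊, C² in ℝⁿ₊ and C¹ on the closed half-space, and suppose −Δu − b·(∂_n u)/x_n = f in ℝⁿ₊, where f is measurable and satisfies ∫_K |f|^p x_n^b dx < ∞ for every compact subset K of the closed half-space. Then ∂_n u(x',0) = 0 for every x' ∈ ℝ^{n-1}. -/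
open MeasureTheory
open scoped ENNReal

open Set Filter
open scoped Topology

noncomputable section

set_option maxHeartbeats 2000000 in
private lemma key (m : ℕ) (ln : Fin (m+1)) (b p : ℝ) (hb : 1 < b) (hpb : b + 1 < p)
    (W : Fin (m+1) → (Fin (m+1) → ℝ) → ℝ)
    (W' : Fin (m+1) → (Fin (m+1) → ℝ) → ((Fin (m+1) → ℝ) →L[ℝ] ℝ))
    (F : (Fin (m+1) → ℝ) → ℝ)
    (hWcont : ∀ i, ContinuousOn (W i) {y : Fin (m+1) → ℝ | 0 ≤ y ln})
    (hW' : ∀ i y, 0 < y ln → HasFDerivAt (W i) (W' i y) y)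
    (hFmeas : Measurable F)
    (hFloc : ∀ lo hi : Fin (m+1) → ℝ, (∀ y ∈ Set.Icc lo hi, 0 ≤ y ln) →
        IntegrableOn (fun y => |F y| ^ p * (y ln) ^ b) (Set.Icc lo hi))
    (hdiv : ∀ y, 0 < y ln →
        (y ln) * (∑ i, W' i y (Pi.single i 1)) + b * W ln y = -((y ln) * F y))
    (y₀ : Fin (m+1) → ℝ) (hy₀ : y₀ ln = 0) :
    W ln y₀ = 0 := by
  have hb0 : (0:ℝ) < b := by linarith
  have hp1 : (1:ℝ) < p := by linarith
  have hp0 : (0:ℝ) < p := by linarith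
  have hq := Real.HolderConjugate.conjExponent hp1
  set q := Real.conjExponent p with hqdef
  have hq0 : (0:ℝ) < q := hq.symm.pos
  have hinv : q⁻¹ = 1 - p⁻¹ := by have := hq.inv_add_inv_eq_one; linarith
  have hδpos : 0 < (b+1)/q - b := by
    have h2 : (b+1) * p⁻¹ < 1 := by
      rw [← div_eq_mul_inv, div_lt_one hp0]; linarith
    have h3 : (b+1)/q - b = 1 - (b+1) * p⁻¹ := by
      rw [div_eq_mul_inv, hinv]; ring
    linarith
  set S : Set (Fin (m+1) → ℝ) := {y | 0 ≤ y ln} with hSdef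
  set y₀' : Fin m → ℝ := ln.removeNth y₀ with hy₀'def
  set h : (Fin m → ℝ) → ℝ := fun z => W ln (ln.insertNth 0 z) with hhdef
  have hS : ∀ (t : ℝ), 0 ≤ t → ∀ z : Fin m → ℝ, (ln.insertNth t z) ∈ S := by
    intro t ht z
    simp only [hSdef, Set.mem_setOf_eq, Fin.insertNth_apply_same]
    exact ht
  have hhcont : Continuous h :=
    (hWcont ln).comp_continuous
      (Continuous.finInsertNth ln continuous_const continuous_id) (hS 0 le_rfl)
  have hkey : W ln y₀ = h y₀' := by
    have h1 := Fin.insertNth_self_removeNth ln y₀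
    rw [hy₀] at h1
    rw [hhdef]; simp only [hy₀'def, h1]
  suffices Hz : ∀ r : ℝ, 0 < r →
      (∫ z in Set.Icc (fun j => y₀' j - r) (fun j => y₀' j + r), h z) = 0 by
    rw [hkey]
    by_contra hne
    have hεpos : 0 < |h y₀'| := abs_pos.mpr hne
    obtain ⟨δ, hδ0, hδ⟩ := Metric.continuousAt_iff.mp hhcont.continuousAt (|h y₀'|/2) (by linarith)
    set r : ℝ := δ/2 with hrdef
    have hr0 : 0 < r := by positivity
    set lo' : Fin m → ℝ := fun j => y₀' j - r with hlo'
    set hi' : Fin m → ℝ := fun j => y₀' j + r with hhi'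
    have hle' : lo' ≤ hi' := fun j => by simp [hlo', hhi']; linarith
    have hvol : (volume (Set.Icc lo' hi')).toReal = (2*r)^m := by
      rw [Real.volume_Icc_pi_toReal hle']
      have hlen : ∀ j : Fin m, hi' j - lo' j = 2*r := fun j => by
        show y₀' j + r - (y₀' j - r) = 2*r; ring
      rw [Finset.prod_congr rfl fun j _ => hlen j, Finset.prod_const, Finset.card_univ,
        Fintype.card_fin]
    have hvolpos : 0 < (2*r:ℝ)^m := by positivity
    have hvlt : volume (Set.Icc lo' hi') < ⊤ := (isCompact_Icc).measure_lt_top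
    have hint : IntegrableOn h (Set.Icc lo' hi') :=
      hhcont.continuousOn.integrableOn_compact isCompact_Icc
    have hzero := Hz r hr0
    have e1 : (∫ z in Set.Icc lo' hi', (h z - h y₀')) = - ((2*r)^m * h y₀') := by
      rw [integral_sub hint (integrableOn_const hvlt.ne), hzero, setIntegral_const, measureReal_def,
        hvol, smul_eq_mul]
      ring
    have e2 : ‖∫ z in Set.Icc lo' hi', (h z - h y₀')‖ ≤ (|h y₀'|/2) * (volume (Set.Icc lo' hi')).toReal := by
      refine norm_setIntegral_le_of_norm_le_const hvlt (fun z hz => ?_)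
      have hdist : dist z y₀' < δ := by
        have : dist z y₀' ≤ r := by
          rw [dist_pi_le_iff hr0.le]
          intro j
          rw [Real.dist_eq, abs_le]
          constructor
          · have := hz.1 j; simp only [hlo'] at this; linarith
          · have := hz.2 j; simp only [hhi'] at this; linarith
        calc dist z y₀' ≤ r := this
          _ < δ := by rw [hrdef]; linarith
      have := hδ hdist
      rw [Real.dist_eq] at this
      rw [Real.norm_eq_abs]
      exact this.le
    rw [e1, hvol] at e2
    rw [norm_neg, Real.norm_eq_abs, abs_mul, abs_of_pos hvolpos] at e2
    have : |h y₀'| ≤ |h y₀'|/2 := by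
      have := (mul_le_mul_iff_right₀ hvolpos).mp (by linarith [e2] : (2*r)^m * |h y₀'| ≤ (2*r)^m * (|h y₀'|/2))
      exact this
    linarith
  intro r hr
  -- the boxes
  set lo : Fin (m+1) → ℝ := Function.update (fun i => y₀ i - r) ln 0 with hlodef
  set HI : ℝ → Fin (m+1) → ℝ := fun t => Function.update (fun i => y₀ i + r) ln t with hHIdef
  have hloln : lo ln = 0 := by simp [hlodef]
  have hHIln : ∀ t, HI t ln = t := fun t => by simp [hHIdef]
  have hlone : ∀ i, i ≠ ln → lo i = y₀ i - r := fun i hi => by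
    simp [hlodef, Function.update_of_ne hi]
  have hHIne : ∀ t i, i ≠ ln → HI t i = y₀ i + r := fun t i hi => by
    simp [hHIdef, Function.update_of_ne hi]
  have hle : ∀ t : ℝ, 0 ≤ t → lo ≤ HI t := by
    intro t ht i
    rcases eq_or_ne i ln with rfl | hi
    · rw [hloln, hHIln]; exact ht
    · rw [hlone i hi, hHIne t i hi]; linarith
  have hS' : ∀ t : ℝ, Set.Icc lo (HI t) ⊆ S := by
    intro t y hy
    have := hy.1 ln
    rw [hloln] at this
    exact this
  have hmono : ∀ s t : ℝ, s ≤ t → Set.Icc lo (HI s) ⊆ Set.Icc lo (HI t) := by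
    intro s t hst
    apply Set.Icc_subset_Icc le_rfl
    intro i
    rcases eq_or_ne i ln with rfl | hi
    · rw [hHIln, hHIln]; exact hst
    · rw [hHIne s i hi, hHIne t i hi]
  have hlosucc : (lo ∘ ln.succAbove) = fun j => y₀' j - r := by
    funext j
    show lo (ln.succAbove j) = _
    rw [hlone _ (Fin.succAbove_ne ln j)]
    rfl
  have hHIsucc : ∀ t, (HI t ∘ ln.succAbove) = fun j => y₀' j + r := by
    intro t; funext j
    show HI t (ln.succAbove j) = _
    rw [hHIne t _ (Fin.succAbove_ne ln j)]
    rfl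
  set Q : Set (Fin m → ℝ) := Set.Icc (fun j => y₀' j - r) (fun j => y₀' j + r) with hQdef
  set I : ℝ → ℝ := fun t => ∫ z in Q, W ln (ln.insertNth t z) with hIdef
  -- bound on the W's over the unit-height box
  have hbW : ∀ i : Fin (m+1), ∃ Mi : ℝ, ∀ y ∈ Set.Icc lo (HI 1), |W i y| ≤ Mi := by
    intro i
    obtain ⟨C, hC⟩ := (isCompact_Icc).exists_bound_of_continuousOn ((hWcont i).mono (hS' 1))
    exact ⟨C, fun y hy => hC y hy⟩
  choose Ms hMs using hbW
  set M : ℝ := ∑ i, |Ms i| with hMdef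
  have hM : ∀ i : Fin (m+1), ∀ y ∈ Set.Icc lo (HI 1), |W i y| ≤ M := by
    intro i y hy
    refine (hMs i y hy).trans ((le_abs_self _).trans ?_)
    exact Finset.single_le_sum (f := fun j => |Ms j|) (fun j _ => abs_nonneg _) (Finset.mem_univ i)
  have hM0 : 0 ≤ M := by
    have hmem : lo ∈ Set.Icc lo (HI 1) := ⟨le_rfl, hle 1 one_pos.le⟩
    exact (abs_nonneg _).trans (hM ln lo hmem)
  -- the weighted L^p bound constant
  have hA : IntegrableOn (fun y => |F y|^p * (y ln)^b) (Set.Icc lo (HI 1)) :=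
    hFloc lo (HI 1) (fun y hy => hS' 1 hy)
  set A : ℝ := ∫ y in Set.Icc lo (HI 1), |F y|^p * (y ln)^b with hAdef
  have hA0 : 0 ≤ A := by
    refine setIntegral_nonneg measurableSet_Icc (fun y hy => ?_)
    have h0y : (0:ℝ) ≤ y ln := hS' 1 hy
    exact mul_nonneg (Real.rpow_nonneg (abs_nonneg _) p) (Real.rpow_nonneg h0y b)
  set C₁ : ℝ := A ^ (1/p) * ((2*r)^m) ^ (1/q) with hC₁def
  set C₂ : ℝ := (2 * (M * ((2*r)^m / (2*r)))) * m with hC₂def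
  have hC₁0 : 0 ≤ C₁ := by
    apply mul_nonneg (Real.rpow_nonneg hA0 _) (Real.rpow_nonneg (by positivity) _)
  -- the main estimate
  have hest : ∀ t : ℝ, t ∈ Set.Ioc (0:ℝ) 1 →
      |I t| * t^b ≤ C₁ * t ^ ((b+1)/q) + C₂ * t^(b+1) := by
    intro t ht
    obtain ⟨ht0, ht1⟩ := ht
    have hlet : lo ≤ HI t := hle t ht0.le
    have hr2 : (0:ℝ) < 2*r := by linarith
    set g : Fin (m+1) → (Fin (m+1) → ℝ) → ℝ := fun i y => (y ln)^b * W i y with hgdef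
    set g' : Fin (m+1) → (Fin (m+1) → ℝ) → (Fin (m+1) → ℝ) →L[ℝ] ℝ := fun i y =>
      (y ln)^b • W' i y + (W i y) • ((b * (y ln)^(b-1)) •
        (ContinuousLinearMap.proj ln : (Fin (m+1) → ℝ) →L[ℝ] ℝ)) with hg'def
    have hrpowc : Continuous (fun y : Fin (m+1) → ℝ => (y ln)^b) :=
      (Real.continuous_rpow_const hb0.le).comp (continuous_apply ln)
    have Hc : ∀ i, ContinuousOn (g i) (Set.Icc lo (HI t)) := fun i =>
      (hrpowc.continuousOn).mul ((hWcont i).mono (hS' t))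
    have Hd : ∀ y ∈ (Set.univ.pi fun i => Set.Ioo (lo i) (HI t i)) \ (∅ : Set (Fin (m+1) → ℝ)),
        ∀ i, HasFDerivAt (g i) (g' i y) y := by
      rintro y ⟨hy, -⟩ i
      have hyln : 0 < y ln := by
        have := (Set.mem_univ_pi.mp hy) ln
        rw [hloln] at this
        exact this.1
      have hproj : HasFDerivAt (fun y : Fin (m+1) → ℝ => y ln)
          (ContinuousLinearMap.proj ln : (Fin (m+1) → ℝ) →L[ℝ] ℝ) y :=
        (ContinuousLinearMap.proj ln : (Fin (m+1) → ℝ) →L[ℝ] ℝ).hasFDerivAt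
      have h1 : HasFDerivAt (fun y : Fin (m+1) → ℝ => (y ln)^b)
          ((b * (y ln)^(b-1)) • (ContinuousLinearMap.proj ln : (Fin (m+1) → ℝ) →L[ℝ] ℝ)) y :=
        ((Real.hasDerivAt_rpow_const (x := y ln) (p := b) (Or.inl hyln.ne')).comp_hasFDerivAt y hproj :)
      exact h1.mul (hW' i y hyln)
    have hdval : ∀ y : Fin (m+1) → ℝ, 0 < y ln →
        (∑ i, g' i y (Pi.single i 1)) = -((y ln)^b * F y) := by
      intro y hy
      have e1 : ∀ i : Fin (m+1), g' i y (Pi.single i 1)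
          = (y ln)^b * (W' i y (Pi.single i 1))
            + W i y * (b * (y ln)^(b-1) * ((Pi.single i (1:ℝ) : Fin (m+1) → ℝ) ln)) := by
        intro i
        simp only [hg'def, ContinuousLinearMap.add_apply, ContinuousLinearMap.coe_smul',
          Pi.smul_apply, ContinuousLinearMap.proj_apply, smul_eq_mul]
        try ring
      rw [Finset.sum_congr rfl (fun i _ => e1 i), Finset.sum_add_distrib, ← Finset.mul_sum]
      have e2 : ∑ i, W i y * (b * (y ln)^(b-1) * ((Pi.single i (1:ℝ) : Fin (m+1) → ℝ) ln))
          = W ln y * (b * (y ln)^(b-1)) := by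
        rw [Finset.sum_eq_single ln (fun i _ hi => by
            rw [Pi.single_eq_of_ne (Ne.symm hi)]; ring)
          (fun hmem => absurd (Finset.mem_univ ln) hmem)]
        rw [Pi.single_eq_same]; ring
      rw [e2]
      have hd := hdiv y hy
      have e4 : (y ln)^(b-1) * (y ln) = (y ln)^b := by
        have h5 : (y ln)^(b-1+1) = (y ln)^(b-1) * (y ln) := Real.rpow_add_one hy.ne' (b-1)
        rw [← h5]; norm_num
      linear_combination ((y ln)^(b-1)) * hd - (∑ i, W' i y (Pi.single i 1) + F y) * e4
    have hFcont_int : IntegrableOn (fun y : Fin (m+1) → ℝ => (y ln)^b) (Set.Icc lo (HI t)) :=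
      hrpowc.continuousOn.integrableOn_compact isCompact_Icc
    have hFp_int : IntegrableOn (fun y => |F y|^p * (y ln)^b) (Set.Icc lo (HI t)) :=
      hFloc lo (HI t) (fun y hy => hS' t hy)
    have hGmeas : Measurable (fun y : Fin (m+1) → ℝ => -((y ln)^b * F y)) :=
      (hrpowc.measurable.mul hFmeas).neg
    have hGint : IntegrableOn (fun y => -((y ln)^b * F y)) (Set.Icc lo (HI t)) := by
      refine Integrable.mono' (hFcont_int.add hFp_int) hGmeas.aestronglyMeasurable.restrict ?_
      refine (ae_restrict_iff' measurableSet_Icc).2 (ae_of_all _ fun y hy => ?_)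
      have h0y : (0:ℝ) ≤ y ln := hS' t hy
      have h0b : (0:ℝ) ≤ (y ln)^b := Real.rpow_nonneg h0y b
      rw [Real.norm_eq_abs, abs_neg, abs_mul, abs_of_nonneg h0b]
      have habsF : |F y| ≤ 1 + |F y|^p := by
        rcases le_total (|F y|) 1 with hle1|hle1
        · nlinarith [Real.rpow_nonneg (abs_nonneg (F y)) p]
        · calc |F y| = |F y|^(1:ℝ) := (Real.rpow_one _).symm
            _ ≤ |F y|^p := Real.rpow_le_rpow_of_exponent_le hle1 hp1.le
            _ ≤ 1 + |F y|^p := by linarith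
      calc (y ln)^b * |F y| ≤ (y ln)^b * (1 + |F y|^p) := by nlinarith
        _ = (y ln)^b + |F y|^p * (y ln)^b := by ring
    have haeeq : (fun y => ∑ i, g' i y (Pi.single i 1))
        =ᵐ[volume.restrict (Set.Icc lo (HI t))] (fun y => -((y ln)^b * F y)) := by
      have hres : (volume : Measure (Fin (m+1) → ℝ)).restrict (Set.Icc lo (HI t))
          = (volume : Measure (Fin (m+1) → ℝ)).restrict
            (Set.univ.pi fun i => Set.Ioo (lo i) (HI t i)) := by
        rw [volume_pi]
        exact (Measure.restrict_congr_set (Measure.univ_pi_Ioo_ae_eq_Icc)).symm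
      rw [hres]
      refine (ae_restrict_iff' (MeasurableSet.univ_pi fun i => measurableSet_Ioo)).2
        (ae_of_all _ fun y hy => ?_)
      have hyln : 0 < y ln := by
        have := (Set.mem_univ_pi.mp hy) ln
        rw [hloln] at this
        exact this.1
      exact hdval y hyln
    have hDivint : IntegrableOn (fun y => ∑ i, g' i y (Pi.single i 1)) (Set.Icc lo (HI t)) :=
      hGint.congr haeeq.symm
    have hdivthm := integral_divergence_of_hasFDerivAt_off_countable' lo (HI t) hlet g g' ∅
      Set.countable_empty Hc Hd hDivint
    have hLHS : (∫ y in Set.Icc lo (HI t), ∑ i, g' i y (Pi.single i 1))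
        = ∫ y in Set.Icc lo (HI t), -((y ln)^b * F y) := integral_congr_ae haeeq
    have hfrontln : (∫ z in Set.Icc (lo ∘ ln.succAbove) (HI t ∘ ln.succAbove),
        g ln (ln.insertNth (HI t ln) z)) = t^b * I t := by
      rw [hlosucc, hHIsucc t, hHIln]
      have e6 : ∀ z : Fin m → ℝ, g ln (ln.insertNth t z) = t^b * W ln (ln.insertNth t z) := by
        intro z; simp only [hgdef, Fin.insertNth_apply_same]
      simp_rw [e6]
      rw [MeasureTheory.integral_const_mul]
    have hbackln : (∫ z in Set.Icc (lo ∘ ln.succAbove) (HI t ∘ ln.succAbove),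
        g ln (ln.insertNth (lo ln) z)) = 0 := by
      rw [hloln]
      have e7 : ∀ z : Fin m → ℝ, g ln (ln.insertNth 0 z) = 0 := by
        intro z
        simp only [hgdef, Fin.insertNth_apply_same]
        rw [Real.zero_rpow hb0.ne', zero_mul]
      simp_rw [e7, integral_zero]
    have hlen : ∀ i, i ≠ ln → HI t i - lo i = 2*r := by
      intro i hi; rw [hHIne t i hi, hlone i hi]; ring
    have hprod : ∏ k, (HI t k - lo k) = t * (2*r)^m := by
      rw [Fin.prod_univ_succAbove (fun k => HI t k - lo k) ln]
      simp only [hHIln, hloln, sub_zero]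
      rw [Finset.prod_congr rfl (fun j _ => hlen _ (Fin.succAbove_ne ln j)), Finset.prod_const,
        Finset.card_univ, Fintype.card_fin]
    have hside : ∀ i : Fin (m+1), i ≠ ln → ∀ c : ℝ, lo i ≤ c → c ≤ HI t i →
        ‖∫ z in Set.Icc (lo ∘ i.succAbove) (HI t ∘ i.succAbove), g i (i.insertNth c z)‖
          ≤ (M * t^b) * (t * (2*r)^m / (2*r)) := by
      intro i hi c hc1 hc2
      have hfmemb : ∀ z ∈ Set.Icc (lo ∘ i.succAbove) (HI t ∘ i.succAbove),
          (i.insertNth c z : Fin (m+1) → ℝ) ∈ Set.Icc lo (HI t) := by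
        intro z hz
        exact Fin.insertNth_mem_Icc.mpr ⟨⟨hc1, hc2⟩, hz⟩
      have hvolface : (volume (Set.Icc (lo ∘ i.succAbove) (HI t ∘ i.succAbove))).toReal
          = t * (2*r)^m / (2*r) := by
        have hlef : (lo ∘ i.succAbove) ≤ (HI t ∘ i.succAbove) := fun j => hlet (i.succAbove j)
        rw [Real.volume_Icc_pi_toReal hlef]
        have h2 := Fin.prod_univ_succAbove (fun k => HI t k - lo k) i
        rw [hprod, hlen i hi] at h2
        rw [eq_div_iff hr2.ne']
        simp only [Function.comp_apply]
        linarith [h2]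
      have hcont : ContinuousOn (fun z => g i (i.insertNth c z))
          (Set.Icc (lo ∘ i.succAbove) (HI t ∘ i.succAbove)) := by
        refine (Hc i).comp ?_ hfmemb
        have := Continuous.finInsertNth (A := fun _ : Fin (m+1) => ℝ) i
          (f := fun _ : Fin m → ℝ => c) continuous_const (g := @id (Fin m → ℝ)) continuous_id
        exact this.continuousOn
      have hboundC : ∀ z ∈ Set.Icc (lo ∘ i.succAbove) (HI t ∘ i.succAbove),
          ‖g i (i.insertNth c z)‖ ≤ M * t^b := by
        intro z hz
        have hmem := hfmemb z hz
        have hmem1 : (i.insertNth c z : Fin (m+1) → ℝ) ∈ Set.Icc lo (HI 1) := hmono t 1 ht1 hmem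
        have h0y : 0 ≤ (i.insertNth c z : Fin (m+1) → ℝ) ln := hS' t hmem
        have hyt : (i.insertNth c z : Fin (m+1) → ℝ) ln ≤ t := (hmem.2 ln).trans_eq (hHIln t)
        rw [Real.norm_eq_abs, hgdef, abs_mul, abs_of_nonneg (Real.rpow_nonneg h0y b)]
        have h1b : ((i.insertNth c z : Fin (m+1) → ℝ) ln)^b ≤ t^b :=
          Real.rpow_le_rpow h0y hyt hb0.le
        have h2b : |W i (i.insertNth c z)| ≤ M := hM i _ hmem1
        calc ((i.insertNth c z : Fin (m+1) → ℝ) ln)^b * |W i (i.insertNth c z)|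
            ≤ t^b * M := by
              apply mul_le_mul h1b h2b (abs_nonneg _) (Real.rpow_nonneg ht0.le b)
          _ = M * t^b := by ring
      have hbnd := norm_setIntegral_le_of_norm_le_const (μ := volume)
        (isCompact_Icc.measure_lt_top) hboundC
      rw [measureReal_def, hvolface] at hbnd
      exact hbnd
    -- Hölder estimate for the bulk term
    have hHold : ‖∫ y in Set.Icc lo (HI t), -((y ln)^b * F y)‖ ≤ C₁ * t ^ ((b+1)/q) := by
      set μt := volume.restrict (Set.Icc lo (HI t)) with hμtdef
      have hae0 : ∀ᵐ y ∂μt, (0:ℝ) ≤ y ln :=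
        (ae_restrict_iff' measurableSet_Icc).2 (ae_of_all _ fun y hy => hS' t hy)
      set f1 : (Fin (m+1) → ℝ) → ℝ := fun y => (y ln)^(b/p) * |F y| with hf1def
      set f2 : (Fin (m+1) → ℝ) → ℝ := fun y => (y ln)^(b/q) with hf2def
      have hbp0 : (0:ℝ) ≤ b/p := by positivity
      have hbq0 : (0:ℝ) ≤ b/q := by positivity
      have hf1m : AEStronglyMeasurable f1 μt :=
        ((((Real.continuous_rpow_const hbp0).comp (continuous_apply ln)).measurable).mul
          hFmeas.abs).aestronglyMeasurable
      have hf2c : Continuous f2 := (Real.continuous_rpow_const hbq0).comp (continuous_apply ln)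
      have hf1p_ae : (fun y => f1 y ^ p) =ᵐ[μt] (fun y => |F y|^p * (y ln)^b) := by
        filter_upwards [hae0] with y h0y
        simp only [hf1def]
        rw [Real.mul_rpow (Real.rpow_nonneg h0y _) (abs_nonneg _), ← Real.rpow_mul h0y,
          div_mul_cancel₀ b hp0.ne']
        ring
      have hf2q_ae : (fun y => f2 y ^ q) =ᵐ[μt] (fun y => (y ln)^b) := by
        filter_upwards [hae0] with y h0y
        simp only [hf2def]
        rw [← Real.rpow_mul h0y, div_mul_cancel₀ b hq0.ne']
      have hbsum : b/p + b/q = b := by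
        have e8 : b/p + b/q = b * (p⁻¹ + q⁻¹) := by ring
        rw [e8, hq.inv_add_inv_eq_one, mul_one]
      have hf1f2_ae : (fun y => f1 y * f2 y) =ᵐ[μt] (fun y => (y ln)^b * |F y|) := by
        filter_upwards [hae0] with y h0y
        simp only [hf1def, hf2def]
        have e9 : (y ln)^(b/p) * (y ln)^(b/q) = (y ln)^b := by
          rw [← Real.rpow_add' h0y (by rw [hbsum]; exact hb0.ne')]
          rw [hbsum]
        calc (y ln)^(b/p) * |F y| * (y ln)^(b/q) = ((y ln)^(b/p) * (y ln)^(b/q)) * |F y| := by ring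
          _ = (y ln)^b * |F y| := by rw [e9]
      have hint1 : Integrable (fun y => f1 y ^ p) μt := hFp_int.congr hf1p_ae.symm
      have hint2 : Integrable (fun y => f2 y ^ q) μt := hFcont_int.congr hf2q_ae.symm
      have hf1nn : 0 ≤ᵐ[μt] f1 := by
        filter_upwards [hae0] with y h0y
        exact mul_nonneg (Real.rpow_nonneg h0y _) (abs_nonneg _)
      have hf2nn : 0 ≤ᵐ[μt] f2 := by
        filter_upwards [hae0] with y h0y
        exact Real.rpow_nonneg h0y _
      have h0p : ENNReal.ofReal p ≠ 0 := by
        rw [Ne, ENNReal.ofReal_eq_zero, not_le]; exact hp0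
      have h0q : ENNReal.ofReal q ≠ 0 := by
        rw [Ne, ENNReal.ofReal_eq_zero, not_le]; exact hq0
      have hmem1 : MemLp f1 (ENNReal.ofReal p) μt := by
        refine (memLp_norm_rpow_iff hf1m h0p ENNReal.ofReal_ne_top).mp ?_
        rw [ENNReal.toReal_ofReal hp0.le, ENNReal.div_self h0p ENNReal.ofReal_ne_top,
          memLp_one_iff_integrable]
        refine hint1.congr ?_
        filter_upwards [hf1nn] with y h0y
        rw [Real.norm_of_nonneg h0y]
      have hmem2 : MemLp f2 (ENNReal.ofReal q) μt := by
        refine (memLp_norm_rpow_iff hf2c.aestronglyMeasurable h0q ENNReal.ofReal_ne_top).mp ?_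
        rw [ENNReal.toReal_ofReal hq0.le, ENNReal.div_self h0q ENNReal.ofReal_ne_top,
          memLp_one_iff_integrable]
        refine hint2.congr ?_
        filter_upwards [hf2nn] with y h0y
        rw [Real.norm_of_nonneg h0y]
      have hH := integral_mul_le_Lp_mul_Lq_of_nonneg hq hf1nn hf2nn hmem1 hmem2
      have hb1 : ∫ y, f1 y ^ p ∂μt ≤ A := by
        rw [integral_congr_ae hf1p_ae]
        refine setIntegral_mono_set hA ?_ (HasSubset.Subset.eventuallyLE (hmono t 1 ht1))
        refine (ae_restrict_iff' measurableSet_Icc).2 (ae_of_all _ fun y hy => ?_)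
        exact mul_nonneg (Real.rpow_nonneg (abs_nonneg _) _)
          (Real.rpow_nonneg (hS' 1 hy) _)
      have hb2 : ∫ y, f2 y ^ q ∂μt ≤ t^b * (t * (2*r)^m) := by
        rw [integral_congr_ae hf2q_ae]
        have hconst : (∫ y in Set.Icc lo (HI t), (t:ℝ)^b)
            = (t * (2*r)^m) * t^b := by
          rw [setIntegral_const, smul_eq_mul, measureReal_def, Real.volume_Icc_pi_toReal hlet]
          rw [hprod]
        calc (∫ y in Set.Icc lo (HI t), (y ln)^b)
            ≤ ∫ y in Set.Icc lo (HI t), (t:ℝ)^b := by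
              refine setIntegral_mono_on hFcont_int
                (integrableOn_const isCompact_Icc.measure_lt_top.ne)
                measurableSet_Icc (fun y hy => ?_)
              exact Real.rpow_le_rpow (hS' t hy) ((hy.2 ln).trans_eq (hHIln t)) hb0.le
          _ = t^b * (t * (2*r)^m) := by rw [hconst]; ring
      have hnn1 : 0 ≤ ∫ y, f1 y ^ p ∂μt := by
        refine integral_nonneg_of_ae ?_
        filter_upwards [hf1nn] with y h0y
        exact Real.rpow_nonneg h0y p
      have hnn2 : 0 ≤ ∫ y, f2 y ^ q ∂μt := by
        refine integral_nonneg_of_ae ?_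
        filter_upwards [hf2nn] with y h0y
        exact Real.rpow_nonneg h0y q
      calc ‖∫ y in Set.Icc lo (HI t), -((y ln)^b * F y)‖
          ≤ ∫ y in Set.Icc lo (HI t), ‖-((y ln)^b * F y)‖ := norm_integral_le_integral_norm _
        _ = ∫ y, f1 y * f2 y ∂μt := by
            refine integral_congr_ae ?_
            filter_upwards [hf1f2_ae, hae0] with y hy h0y
            rw [Real.norm_eq_abs, abs_neg, abs_mul, abs_of_nonneg (Real.rpow_nonneg h0y b), hy]
        _ ≤ (∫ y, f1 y ^ p ∂μt) ^ (1/p) * (∫ y, f2 y ^ q ∂μt) ^ (1/q) := hH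
        _ ≤ A ^ (1/p) * (t^b * (t * (2*r)^m)) ^ (1/q) := by
            refine mul_le_mul (Real.rpow_le_rpow hnn1 hb1 (by positivity))
              (Real.rpow_le_rpow hnn2 hb2 (by positivity))
              (Real.rpow_nonneg hnn2 _) (Real.rpow_nonneg hA0 _)
        _ = C₁ * t ^ ((b+1)/q) := by
            rw [hC₁def]
            have e5 : t^b * (t * (2*r)^m) = t^(b+1) * (2*r)^m := by
              rw [Real.rpow_add_one ht0.ne']; ring
            rw [e5, Real.mul_rpow (Real.rpow_nonneg ht0.le _) (by positivity),
              ← Real.rpow_mul ht0.le, mul_one_div]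
            ring
    -- assemble
    have hsum := hdivthm
    rw [hLHS, Fin.sum_univ_succAbove (fun i =>
        (∫ z in Set.Icc (lo ∘ i.succAbove) (HI t ∘ i.succAbove), g i (i.insertNth (HI t i) z)) -
        (∫ z in Set.Icc (lo ∘ i.succAbove) (HI t ∘ i.succAbove), g i (i.insertNth (lo i) z))) ln,
      hfrontln, hbackln, sub_zero] at hsum
    have hsidebound : |∑ j : Fin m,
        ((∫ z in Set.Icc (lo ∘ (ln.succAbove j).succAbove) (HI t ∘ (ln.succAbove j).succAbove),
            g (ln.succAbove j) ((ln.succAbove j).insertNth (HI t (ln.succAbove j)) z)) -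
         (∫ z in Set.Icc (lo ∘ (ln.succAbove j).succAbove) (HI t ∘ (ln.succAbove j).succAbove),
            g (ln.succAbove j) ((ln.succAbove j).insertNth (lo (ln.succAbove j)) z)))|
        ≤ C₂ * t^(b+1) := by
      refine (Finset.abs_sum_le_sum_abs _ _).trans ?_
      have hterm : ∀ j : Fin m,
          |(∫ z in Set.Icc (lo ∘ (ln.succAbove j).succAbove) (HI t ∘ (ln.succAbove j).succAbove),
            g (ln.succAbove j) ((ln.succAbove j).insertNth (HI t (ln.succAbove j)) z)) -
           (∫ z in Set.Icc (lo ∘ (ln.succAbove j).succAbove) (HI t ∘ (ln.succAbove j).succAbove),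
            g (ln.succAbove j) ((ln.succAbove j).insertNth (lo (ln.succAbove j)) z))|
          ≤ 2 * ((M * t^b) * (t * (2*r)^m / (2*r))) := by
        intro j
        have hne := Fin.succAbove_ne ln j
        have h1 := hside (ln.succAbove j) hne (HI t (ln.succAbove j)) (hlet _) le_rfl
        have h2 := hside (ln.succAbove j) hne (lo (ln.succAbove j)) le_rfl (hlet _)
        rw [Real.norm_eq_abs] at h1 h2
        calc _ ≤ _ := abs_sub _ _
          _ ≤ 2 * ((M * t^b) * (t * (2*r)^m / (2*r))) := by linarith
      refine (Finset.sum_le_sum (fun j _ => hterm j)).trans ?_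
      rw [Finset.sum_const, Finset.card_univ, Fintype.card_fin, nsmul_eq_mul]
      have e10 : t^b * t = t^(b+1) := by rw [Real.rpow_add_one ht0.ne']
      refine le_of_eq ?_
      rw [hC₂def, ← e10]
      ring
    have hfin : t^b * I t = (∫ y in Set.Icc lo (HI t), -((y ln)^b * F y)) -
        ∑ j : Fin m,
        ((∫ z in Set.Icc (lo ∘ (ln.succAbove j).succAbove) (HI t ∘ (ln.succAbove j).succAbove),
            g (ln.succAbove j) ((ln.succAbove j).insertNth (HI t (ln.succAbove j)) z)) -
         (∫ z in Set.Icc (lo ∘ (ln.succAbove j).succAbove) (HI t ∘ (ln.succAbove j).succAbove),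
            g (ln.succAbove j) ((ln.succAbove j).insertNth (lo (ln.succAbove j)) z))) := by
      linarith [hsum]
    calc |I t| * t^b = |t^b * I t| := by
          rw [abs_mul, abs_of_nonneg (Real.rpow_nonneg ht0.le b)]; ring
      _ ≤ ‖∫ y in Set.Icc lo (HI t), -((y ln)^b * F y)‖ + C₂ * t^(b+1) := by
          rw [hfin, Real.norm_eq_abs]
          exact (abs_sub _ _).trans (by linarith [hsidebound])
      _ ≤ C₁ * t ^ ((b+1)/q) + C₂ * t^(b+1) := by linarith [hHold]
  -- limits
  have hQb : ∀ t : ℝ, 0 ≤ t → t ≤ 1 → ∀ z ∈ Q, ln.insertNth t z ∈ Set.Icc lo (HI 1) := by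
    intro t ht0 ht1 z hz
    refine Fin.insertNth_mem_Icc.mpr ⟨⟨?_, ?_⟩, ?_⟩
    · rw [hloln]; exact ht0
    · rw [hHIln]; exact ht1
    · have h1 := hz
      rw [hQdef, ← hlosucc, ← hHIsucc 1] at h1
      exact h1
  have hIlim : Tendsto I (𝓝[>] (0:ℝ)) (𝓝 (∫ z in Q, h z)) := by
    rw [hIdef]
    refine tendsto_integral_filter_of_dominated_convergence (fun _ => M) ?_ ?_ ?_ ?_
    · filter_upwards [Ioc_mem_nhdsGT (one_pos : (0:ℝ) < 1)] with t ht
      have hc : Continuous (fun z : Fin m → ℝ => W ln (ln.insertNth t z)) :=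
        (hWcont ln).comp_continuous
          (Continuous.finInsertNth ln continuous_const continuous_id) (hS t ht.1.le)
      exact hc.aestronglyMeasurable
    · filter_upwards [Ioc_mem_nhdsGT (one_pos : (0:ℝ) < 1)] with t ht
      refine (ae_restrict_iff' measurableSet_Icc).2 (ae_of_all _ fun z hz => ?_)
      rw [Real.norm_eq_abs]
      exact hM ln _ (hQb t ht.1.le ht.2 z hz)
    · exact integrableOn_const (isCompact_Icc.measure_lt_top).ne
    · refine ae_of_all _ fun (z : Fin m → ℝ) => ?_
      have h1 : Tendsto (fun t : ℝ => (ln.insertNth t z : Fin (m+1) → ℝ)) (𝓝[>] (0:ℝ))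
          (𝓝[S] ((ln.insertNth 0 z : Fin (m+1) → ℝ))) := by
        refine tendsto_nhdsWithin_of_tendsto_nhds_of_eventually_within _ ?_ ?_
        · have hc : Continuous (fun t : ℝ => (ln.insertNth t z : Fin (m+1) → ℝ)) := by
            have := Continuous.finInsertNth (A := fun _ : Fin (m+1) => ℝ) ln
              (f := @id ℝ) continuous_id (g := fun _ : ℝ => z) continuous_const
            simpa using this
          exact (hc.tendsto 0).mono_left nhdsWithin_le_nhds
        · filter_upwards [self_mem_nhdsWithin] with t ht
          exact hS t (le_of_lt ht) z
      exact ((hWcont ln _ (hS 0 le_rfl z)).tendsto).comp h1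
  have hIbound : ∀ t : ℝ, t ∈ Set.Ioc (0:ℝ) 1 →
      |I t| ≤ C₁ * t ^ ((b+1)/q - b) + C₂ * t := by
    intro t ht
    have ht0 : 0 < t := ht.1
    have htb : 0 < t^b := Real.rpow_pos_of_pos ht0 b
    rw [← mul_le_mul_iff_left₀ htb]
    refine (hest t ht).trans (le_of_eq ?_)
    have e1 : t ^ ((b+1)/q) = t ^ ((b+1)/q - b) * t^b := by
      rw [← Real.rpow_add ht0]; ring_nf
    have e2 : t ^ (b+1) = t * t^b := by
      rw [Real.rpow_add_one ht0.ne']; ring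
    rw [e1, e2]; ring
  have hrpow0 : ∀ e : ℝ, 0 < e → Tendsto (fun t:ℝ => t ^ e) (𝓝[>] (0:ℝ)) (𝓝 0) := by
    intro e he
    have hc : ContinuousAt (fun t:ℝ => t ^ e) 0 := Real.continuousAt_rpow_const 0 e (Or.inr he.le)
    have := hc.tendsto
    rw [Real.zero_rpow he.ne'] at this
    exact this.mono_left nhdsWithin_le_nhds
  have hbnd0 : Tendsto (fun t => C₁ * t ^ ((b+1)/q - b) + C₂ * t) (𝓝[>] (0:ℝ)) (𝓝 0) := by
    have h1 := (hrpow0 _ hδpos).const_mul C₁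
    have h2 : Tendsto (fun t:ℝ => C₂ * t) (𝓝[>] (0:ℝ)) (𝓝 0) := by
      have : Tendsto (fun t:ℝ => t) (𝓝[>] (0:ℝ)) (𝓝 0) := tendsto_id'.mpr nhdsWithin_le_nhds
      simpa using this.const_mul C₂
    simpa using h1.add h2
  have habs : |∫ z in Q, h z| ≤ 0 := by
    have hIabs : Tendsto (fun t => |I t|) (𝓝[>] (0:ℝ)) (𝓝 |∫ z in Q, h z|) := hIlim.abs
    have hev : ∀ᶠ t in 𝓝[>] (0:ℝ), |I t| ≤ C₁ * t ^ ((b+1)/q - b) + C₂ * t := by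
      filter_upwards [Ioc_mem_nhdsGT (one_pos : (0:ℝ) < 1)] with t ht
      exact hIbound t ht
    exact le_of_tendsto_of_tendsto hIabs hbnd0 hev
  have := abs_nonneg (∫ z in Q, h z)
  have : |∫ z in Q, h z| = 0 := le_antisymm habs this
  exact abs_eq_zero.mp this

set_option maxHeartbeats 1000000 in
theorem stmt18 (n : ℕ) (hn : 2 ≤ n) (ln : Fin n) (hln : (ln : ℕ) = n - 1)
    (b p : ℝ) (hb : 1 < b) (hp : (n : ℝ) + b < p)
    (u f : Eu n → ℝ) (Du : Eu n → (Eu n →L[ℝ] ℝ))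
    -- u is bounded on ℝⁿ₊
    (hbdd : ∃ M : ℝ, ∀ x : Eu n, 0 < x ln → |u x| ≤ M)
    -- u is C² in ℝⁿ₊
    (hC2 : ContDiffOn ℝ 2 u {x : Eu n | 0 < x ln})
    -- u is C¹ on the closed half-space, with derivative Du
    (hC1 : ∀ x : Eu n, 0 ≤ x ln →
      HasFDerivWithinAt u (Du x) {y : Eu n | 0 ≤ y ln} x)
    (hDucont : ContinuousOn Du {y : Eu n | 0 ≤ y ln})
    -- f is measurable with ∫_K |f|^p xₙ^b dx < ∞ on every compact K ⊆ closed half-space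
    (hfmeas : Measurable f)
    (hfloc : ∀ K : Set (Eu n), IsCompact K → K ⊆ {y : Eu n | 0 ≤ y ln} →
      MeasureTheory.IntegrableOn (fun x => |f x| ^ p * (x ln) ^ b) K)
    -- −Δu − b uₙ/xₙ = f in ℝⁿ₊
    (heq : ∀ x : Eu n, 0 < x ln →
      -(∑ i, pd2 u i i x) - b * pd u ln x / x ln = f x) :
    -- then the Neumann boundary condition holds
    ∀ x : Eu n, x ln = 0 → Du x (EuclideanSpace.single ln 1) = 0 := by
  intro x₀ hx₀
  obtain ⟨m, rfl⟩ : ∃ m, n = m + 1 := ⟨n - 1, by omega⟩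
  set ψ : (Fin (m+1) → ℝ) ≃L[ℝ] Eu (m+1) :=
    (PiLp.continuousLinearEquiv 2 ℝ (fun _ : Fin (m+1) => ℝ)).symm with hψdef
  set v : Fin (m+1) → Eu (m+1) := fun i => EuclideanSpace.single i 1 with hvdef
  set U : Set (Eu (m+1)) := {x | 0 < x ln} with hUdef
  have hUopen : IsOpen U := by
    have hcont : Continuous fun x : Eu (m+1) => x ln :=
      (continuous_apply ln).comp ψ.symm.continuous
    exact isOpen_lt continuous_const hcont
  have hmemU : ∀ x : Eu (m+1), 0 < x ln → U ∈ nhds x := fun x hx => hUopen.mem_nhds hx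
  have hnhds : ∀ x : Eu (m+1), 0 < x ln → {y : Eu (m+1) | 0 ≤ y ln} ∈ nhds x := fun x hx =>
    Filter.mem_of_superset (hmemU x hx) (fun z hz => le_of_lt (show 0 < z ln from hz))
  have hfd : ∀ x : Eu (m+1), 0 < x ln → HasFDerivAt u (Du x) x := fun x hx =>
    (hC1 x (le_of_lt hx)).hasFDerivAt (hnhds x hx)
  have hfdeq : ∀ x : Eu (m+1), 0 < x ln → fderiv ℝ u x = Du x := fun x hx => (hfd x hx).fderiv
  have hC2' : ContDiffOn ℝ 1 (fderiv ℝ u) U := hC2.fderiv_of_isOpen hUopen (by norm_num)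
  have hD2 : ∀ x : Eu (m+1), 0 < x ln →
      HasFDerivAt (fderiv ℝ u) (fderiv ℝ (fderiv ℝ u) x) x := by
    intro x hx
    have h1 : DifferentiableOn ℝ (fderiv ℝ u) U := hC2'.differentiableOn one_ne_zero
    exact ((h1 x hx).differentiableAt (hmemU x hx)).hasFDerivAt
  have hpdAt : ∀ (i : Fin (m+1)) (x : Eu (m+1)), 0 < x ln →
      HasFDerivAt (pd u i)
        ((ContinuousLinearMap.apply ℝ ℝ (v i)).comp (fderiv ℝ (fderiv ℝ u) x)) x := by
    intro i x hx
    exact (ContinuousLinearMap.apply ℝ ℝ (v i)).hasFDerivAt.comp x (hD2 x hx)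
  have hpd2 : ∀ (i : Fin (m+1)) (x : Eu (m+1)), 0 < x ln →
      pd2 u i i x = fderiv ℝ (fderiv ℝ u) x (v i) (v i) := by
    intro i x hx
    have h1 := (hpdAt i x hx).fderiv
    show fderiv ℝ (pd u i) x (EuclideanSpace.single i 1) = _
    rw [h1]
    rfl
  set W : Fin (m+1) → (Fin (m+1) → ℝ) → ℝ := fun i y => Du (ψ y) (v i) with hWdef
  set W' : Fin (m+1) → (Fin (m+1) → ℝ) → ((Fin (m+1) → ℝ) →L[ℝ] ℝ) := fun i y =>
    (ContinuousLinearMap.apply ℝ ℝ (v i)).comp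
      ((fderiv ℝ (fderiv ℝ u) (ψ y)).comp
        (ψ : (Fin (m+1) → ℝ) →L[ℝ] Eu (m+1))) with hW'def
  set F : (Fin (m+1) → ℝ) → ℝ := fun y => f (ψ y) with hFdef
  have hWcont : ∀ i, ContinuousOn (W i) {y : Fin (m+1) → ℝ | 0 ≤ y ln} := by
    intro i
    have h1 : ContinuousOn (fun x : Eu (m+1) => Du x (v i)) {x : Eu (m+1) | 0 ≤ x ln} :=
      (ContinuousLinearMap.apply ℝ ℝ (v i)).continuous.comp_continuousOn hDucont
    exact h1.comp ψ.continuous.continuousOn (fun y hy => hy)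
  have hW'At : ∀ i (y : Fin (m+1) → ℝ), 0 < y ln → HasFDerivAt (W i) (W' i y) y := by
    intro i y hy
    have hx : 0 < (ψ y) ln := hy
    have h1 : HasFDerivAt (fun z : Fin (m+1) → ℝ => fderiv ℝ u (ψ z))
        ((fderiv ℝ (fderiv ℝ u) (ψ y)).comp (ψ : (Fin (m+1) → ℝ) →L[ℝ] Eu (m+1))) y :=
      (hD2 (ψ y) hx).comp y ψ.hasFDerivAt
    have h2 : HasFDerivAt (fun z : Fin (m+1) → ℝ => fderiv ℝ u (ψ z) (v i)) (W' i y) y :=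
      (ContinuousLinearMap.apply ℝ ℝ (v i)).hasFDerivAt.comp y h1
    refine h2.congr_of_eventuallyEq ?_
    have hopen : IsOpen {z : Fin (m+1) → ℝ | 0 < z ln} :=
      isOpen_lt continuous_const (continuous_apply ln)
    filter_upwards [hopen.mem_nhds hy] with z hz
    show W i z = fderiv ℝ u (ψ z) (v i)
    rw [hfdeq (ψ z) hz]
  have hFmeas : Measurable F := hfmeas.comp ψ.continuous.measurable
  have hFloc' : ∀ lo hi : Fin (m+1) → ℝ, (∀ y ∈ Set.Icc lo hi, 0 ≤ y ln) →
      IntegrableOn (fun y => |F y| ^ p * (y ln) ^ b) (Set.Icc lo hi) := by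
    intro lo hi hsub
    have hK : IsCompact (⇑ψ '' Set.Icc lo hi) := (isCompact_Icc).image ψ.continuous
    have hKS : (⇑ψ '' Set.Icc lo hi) ⊆ {x : Eu (m+1) | 0 ≤ x ln} := by
      rintro x ⟨y, hy, rfl⟩
      exact hsub y hy
    have h1 := hfloc _ hK hKS
    have h2 : MeasurePreserving (⇑ψ) volume volume :=
      PiLp.volume_preserving_toLp (Fin (m+1))
    have h3 : MeasurableEmbedding (⇑ψ) := ψ.toHomeomorph.measurableEmbedding
    have h4 := (h2.integrableOn_comp_preimage h3).mpr h1
    rw [Set.preimage_image_eq _ ψ.injective] at h4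
    exact h4
  have hdiv : ∀ y : Fin (m+1) → ℝ, 0 < y ln →
      (y ln) * (∑ i, W' i y (Pi.single i 1)) + b * W ln y = -((y ln) * F y) := by
    intro y hy
    have hx : 0 < (ψ y) ln := hy
    have he := heq (ψ y) hx
    have hWval : ∀ i, W' i y (Pi.single i 1) = pd2 u i i (ψ y) := by
      intro i
      rw [hpd2 i (ψ y) hx]
      rfl
    have hWln : W ln y = pd u ln (ψ y) := by
      show Du (ψ y) (v ln) = fderiv ℝ u (ψ y) (EuclideanSpace.single ln 1)
      rw [hfdeq (ψ y) hx]
    simp_rw [hWval]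
    rw [hWln]
    have hyne : (y ln) ≠ 0 := hy.ne'
    have hcoord : (ψ y) ln = y ln := rfl
    rw [hcoord] at he
    show (y ln) * (∑ i, pd2 u i i (ψ y)) + b * pd u ln (ψ y) = -((y ln) * f (ψ y))
    have he' : (-(∑ i, pd2 u i i (ψ y)) - b * pd u ln (ψ y) / (y ln)) * (y ln)
        = f (ψ y) * (y ln) := by rw [he]
    rw [sub_mul, div_mul_cancel₀ _ hyne] at he'
    linear_combination -he'
  have hpb : b + 1 < p := by
    have h2 : (2:ℝ) ≤ ((m+1 : ℕ) : ℝ) := by exact_mod_cast hn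
    have := hp
    push_cast at this ⊢
    linarith
  have hy₀ : (ψ.symm x₀) ln = 0 := hx₀
  have hfinal := key m ln b p hb hpb W W' F hWcont hW'At hFmeas hFloc' hdiv (ψ.symm x₀) hy₀
  have : Du (ψ (ψ.symm x₀)) (v ln) = 0 := hfinal
  rw [ψ.apply_symm_apply] at this
  exact this
end
end
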